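/- arXiv:2306.17746 — 7 statements merged into one kernel-verified Lean document; each statement's English description precedes it below -/
import Mathlib

section
/- There exists an absolute constant C > 0 such that for every α > 0, every b ∈ L∞(ℝ), and every g ∈ L¹_loc(ℝ) not a.e. zero whose maximal function Mg satisfies log(Mg) ∈ L¹_loc(ℝ), the function f = α·log(Mg) + b satisfies ‖f‖_BLO ≤ C·(α + ‖b‖_{L∞}). -/
open MeasureTheory Filter Set

noncomputable section

/-- Mean value of `f` over the interval `[a,b]`. -/
def intAvg (f : ℝ → ℝ) (a b : ℝ) : ℝ := (b - a)⁻¹ * ∫ x in a..b, f x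

/-- Essential infimum of `f` over the interval `[a,b]`. -/
def essInfIcc (f : ℝ → ℝ) (a b : ℝ) : ℝ :=
  essInf f (volume.restrict (Set.Icc a b))

/-- Lower oscillation of `f` over `[a,b]`: mean minus essential infimum. -/
def lowOsc (f : ℝ → ℝ) (a b : ℝ) : ℝ := intAvg f a b - essInfIcc f a b

/-- The set of lower oscillations of `f` over compact subintervals of `Ω`. -/
def oscSetOn (f : ℝ → ℝ) (Ω : Set ℝ) : Set ℝ :=
  {c | ∃ a b : ℝ, a < b ∧ Set.Icc a b ⊆ Ω ∧ c = lowOsc f a b}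

def oscSet (f : ℝ → ℝ) : Set ℝ := oscSetOn f Set.univ

/-- BLO seminorm relative to `Ω`. -/
def bloNormOn (f : ℝ → ℝ) (Ω : Set ℝ) : ℝ := sSup (oscSetOn f Ω)

/-- The BLO seminorm on ℝ. -/
def bloNorm (f : ℝ → ℝ) : ℝ := sSup (oscSet f)

/-- `f ∈ BLO(ℝ)`. -/
def MemBLO (f : ℝ → ℝ) : Prop :=
  MeasureTheory.LocallyIntegrable f ∧ BddAbove (oscSet f)

/-- `b ∈ L∞(ℝ)`. -/
def MemLinfty (b : ℝ → ℝ) : Prop :=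
  AEStronglyMeasurable b volume ∧ ∃ M : ℝ, ∀ᵐ x ∂volume, |b x| ≤ M

/-- The `L∞` norm of `b`. -/
def linftyNorm (b : ℝ → ℝ) : ℝ :=
  sInf {M : ℝ | 0 ≤ M ∧ ∀ᵐ x ∂volume, |b x| ≤ M}

/-- `b ∈ L∞(Ω)`. -/
def MemLinftyOn (b : ℝ → ℝ) (Ω : Set ℝ) : Prop :=
  AEStronglyMeasurable b (volume.restrict Ω) ∧
    ∃ M : ℝ, ∀ᵐ x ∂volume, x ∈ Ω → |b x| ≤ M

/-- Uncentered Hardy–Littlewood maximal function of `g` (over intervals containing `x`). -/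
def maxFn (g : ℝ → ℝ) (x : ℝ) : ℝ :=
  sSup {c | ∃ a b : ℝ, a < b ∧ x ∈ Set.Icc a b ∧ c = (b - a)⁻¹ * ∫ t in a..b, |g t|}

/-- The Muckenhoupt `A₁` inequality with constant `C` over compact subintervals of `Ω`. -/
def A1BoundOn (w : ℝ → ℝ) (Ω : Set ℝ) (C : ℝ) : Prop :=
  ∀ a b : ℝ, a < b → Set.Icc a b ⊆ Ω → intAvg w a b ≤ C * essInfIcc w a b

/-- `w` belongs to the Muckenhoupt class `A₁` relative to `Ω`. -/
def MemA1On (w : ℝ → ℝ) (Ω : Set ℝ) : Prop :=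
  MeasureTheory.LocallyIntegrableOn w Ω ∧
    (∀ᵐ x ∂volume, x ∈ Ω → 0 ≤ w x) ∧ ∃ C : ℝ, A1BoundOn w Ω C

/-- `w` belongs to the Muckenhoupt class `A₁` on ℝ. -/
def MemA1 (w : ℝ → ℝ) : Prop := MemA1On w Set.univ

/-- The `A₁` constant of a weight `w` on ℝ. -/
def a1Const (w : ℝ → ℝ) : ℝ := sInf {C : ℝ | 0 ≤ C ∧ A1BoundOn w Set.univ C}

/-- `σ(f) = inf {μ > 0 : e^(f/μ) ∈ A₁}`. -/
def sigmaBLO (f : ℝ → ℝ) : ℝ :=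
  sInf {μ : ℝ | 0 < μ ∧ MemA1 fun x => Real.exp (f x / μ)}

/-- Admissible values `α + ‖b‖_∞` for decompositions `f = α log(Mg) + b`. -/
def newNormSet (f : ℝ → ℝ) : Set ℝ :=
  {c | ∃ α : ℝ, 0 < α ∧ ∃ b g : ℝ → ℝ, MemLinfty b ∧ MeasureTheory.LocallyIntegrable g ∧
    (f =ᵐ[volume] fun x => α * Real.log (maxFn g x) + b x) ∧
    c = α + linftyNorm b}

/-- The new norm `‖f‖'_BLO`. -/
def newNorm (f : ℝ → ℝ) : ℝ := sInf (newNormSet f)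

/-- `W_a(f)`: supremum of lower oscillations over intervals of length at most `a`. -/
def Wosc (f : ℝ → ℝ) (a : ℝ) : ℝ :=
  sSup {c | ∃ s t : ℝ, s < t ∧ t - s ≤ a ∧ c = lowOsc f s t}

/-- `f ∈ VLO(ℝ)`. -/
def MemVLO (f : ℝ → ℝ) : Prop :=
  MemBLO f ∧ Filter.Tendsto (Wosc f) (nhdsWithin 0 (Set.Ioi 0)) (nhds 0)

/-- Mean oscillation of `f` over `[a,b]`. -/
def meanOsc (f : ℝ → ℝ) (a b : ℝ) : ℝ :=
  (b - a)⁻¹ * ∫ x in a..b, |f x - intAvg f a b|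

def bmoSet (f : ℝ → ℝ) : Set ℝ := {c | ∃ a b : ℝ, a < b ∧ c = meanOsc f a b}

/-- The BMO seminorm. -/
def bmoNorm (f : ℝ → ℝ) : ℝ := sSup (bmoSet f)

/-- `f ∈ BMO(ℝ)`. -/
def MemBMO (f : ℝ → ℝ) : Prop :=
  MeasureTheory.LocallyIntegrable f ∧ BddAbove (bmoSet f)

/-- supremum of mean oscillations over intervals of length at most `a`. -/
def WoscM (f : ℝ → ℝ) (a : ℝ) : ℝ :=
  sSup {c | ∃ s t : ℝ, s < t ∧ t - s ≤ a ∧ c = meanOsc f s t}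

/-- `f ∈ VMO(ℝ)`. -/
def MemVMO (f : ℝ → ℝ) : Prop :=
  MemBMO f ∧ Filter.Tendsto (WoscM f) (nhdsWithin 0 (Set.Ioi 0)) (nhds 0)


namespace BLOaux

/-- The set whose supremum defines `maxFn`. -/
def MXset (g : ℝ → ℝ) (x : ℝ) : Set ℝ :=
  {c | ∃ a b : ℝ, a < b ∧ x ∈ Set.Icc a b ∧ c = (b - a)⁻¹ * ∫ t in a..b, |g t|}

lemma maxFn_eq (g : ℝ → ℝ) (x : ℝ) : maxFn g x = sSup (MXset g x) := rfl

lemma MXset_nonempty (g : ℝ → ℝ) (x : ℝ) : (MXset g x).Nonempty := by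
  refine ⟨((x+1) - (x-1))⁻¹ * ∫ t in (x-1)..(x+1), |g t|, x - 1, x + 1, by linarith, ?_, rfl⟩
  constructor <;> linarith

lemma MXset_mem_nonneg {g : ℝ → ℝ} {x c : ℝ} (hc : c ∈ MXset g x) : 0 ≤ c := by
  obtain ⟨a, b, hab, -, rfl⟩ := hc
  have h1 : 0 ≤ ∫ t in a..b, |g t| :=
    intervalIntegral.integral_nonneg hab.le (fun t _ => abs_nonneg _)
  have h2 : (0:ℝ) ≤ (b - a)⁻¹ := by
    have : (0:ℝ) < b - a := by linarith
    positivity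
  exact mul_nonneg h2 h1

lemma maxFn_nonneg (g : ℝ → ℝ) (x : ℝ) : 0 ≤ maxFn g x := by
  rw [maxFn_eq]
  by_cases hB : BddAbove (MXset g x)
  · obtain ⟨c, hc⟩ := MXset_nonempty g x
    exact le_trans (MXset_mem_nonneg hc) (le_csSup hB hc)
  · rw [Real.sSup_of_not_bddAbove hB]

lemma le_maxFn {g : ℝ → ℝ} {x c : ℝ} (hB : BddAbove (MXset g x)) (hc : c ∈ MXset g x) :
    c ≤ maxFn g x := le_csSup hB hc

/-- monotonicity of the integral of `|g|` in the interval. -/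
lemma integral_abs_mono {g : ℝ → ℝ} (hg : MeasureTheory.LocallyIntegrable g)
    {a b c d : ℝ} (hca : c ≤ a) (hab : a ≤ b) (hbd : b ≤ d) :
    ∫ t in a..b, |g t| ≤ ∫ t in c..d, |g t| := by
  have hcd : c ≤ d := le_trans hca (le_trans hab hbd)
  rw [intervalIntegral.integral_of_le hab, intervalIntegral.integral_of_le hcd]
  have hint : MeasureTheory.IntegrableOn (fun t => |g t|) (Set.Ioc c d) := by
    exact ((hg.integrableOn_isCompact isCompact_Icc).mono_set Set.Ioc_subset_Icc_self).abs
  refine MeasureTheory.setIntegral_mono_set hint ?_ ?_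
  · exact MeasureTheory.ae_of_all _ fun t => abs_nonneg _
  · exact HasSubset.Subset.eventuallyLE (Set.Ioc_subset_Ioc hca hbd)

/-- essential infimum lower bound on an interval. -/
lemma le_essInfIcc {f : ℝ → ℝ} {a b c : ℝ} (hab : a < b)
    (h : ∀ᵐ x ∂(MeasureTheory.volume.restrict (Set.Icc a b)), c ≤ f x) :
    c ≤ essInfIcc f a b := by
  set μ := MeasureTheory.volume.restrict (Set.Icc a b) with hμ
  have hne : μ ≠ 0 := by
    intro h0
    have : μ Set.univ = 0 := by rw [h0]; rfl
    rw [hμ, MeasureTheory.Measure.restrict_apply MeasurableSet.univ, Set.univ_inter,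
      Real.volume_Icc] at this
    rw [ENNReal.ofReal_eq_zero] at this
    linarith
  haveI : (MeasureTheory.ae μ).NeBot := MeasureTheory.ae_neBot.2 hne
  have : essInfIcc f a b = sSup {d | ∀ᵐ x ∂μ, d ≤ f x} := by
    rw [essInfIcc, essInf, Filter.liminf_eq]
  rw [this]
  refine le_csSup ?_ h
  by_contra hB
  rw [not_bddAbove_iff] at hB
  have hn : ∀ n : ℕ, ∀ᵐ x ∂μ, (n : ℝ) ≤ f x := by
    intro n
    obtain ⟨d, hd, hnd⟩ := hB (n : ℝ)
    have hd2 : ∀ᵐ x ∂μ, d ≤ f x := hd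
    exact hd2.mono fun x hx => le_trans hnd.le hx
  have hall : ∀ᵐ x ∂μ, ∀ n : ℕ, (n : ℝ) ≤ f x := MeasureTheory.ae_all_iff.2 hn
  obtain ⟨x, hx⟩ := hall.exists
  obtain ⟨n, hn'⟩ := exists_nat_gt (f x)
  exact absurd (hx n) (not_le.2 hn')

end BLOaux
namespace BLOaux

lemma linftyNorm_nonneg (b : ℝ → ℝ) : 0 ≤ linftyNorm b := by
  apply Real.sInf_nonneg
  rintro M ⟨hM, -⟩
  exact hM

lemma abs_le_linftyNorm {b : ℝ → ℝ} (hb : MemLinfty b) :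
    ∀ᵐ x ∂MeasureTheory.volume, |b x| ≤ linftyNorm b := by
  obtain ⟨-, M, hM⟩ := hb
  set S : Set ℝ := {M : ℝ | 0 ≤ M ∧ ∀ᵐ x ∂MeasureTheory.volume, |b x| ≤ M} with hS
  have hSne : S.Nonempty := ⟨max M 0, le_max_right _ _,
    hM.mono fun x hx => le_trans hx (le_max_left _ _)⟩
  have hSbd : BddBelow S := ⟨0, fun M' hM' => hM'.1⟩
  have key : ∀ n : ℕ, ∀ᵐ x ∂MeasureTheory.volume, |b x| ≤ linftyNorm b + ((n:ℝ)+1)⁻¹ := by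
    intro n
    have hlt : sInf S < sInf S + ((n:ℝ)+1)⁻¹ := by
      have : (0:ℝ) < ((n:ℝ)+1)⁻¹ := by positivity
      linarith
    obtain ⟨M', hM', hlt'⟩ := exists_lt_of_csInf_lt hSne hlt
    exact hM'.2.mono fun x hx => le_trans hx hlt'.le
  have hall := MeasureTheory.ae_all_iff.2 key
  refine hall.mono fun x hx => ?_
  by_contra hcon
  push_neg at hcon
  obtain ⟨n, hn⟩ := exists_nat_gt (|b x| - linftyNorm b)⁻¹
  have hpos : 0 < |b x| - linftyNorm b := by linarith
  have h1 : ((n:ℝ)+1)⁻¹ < |b x| - linftyNorm b := by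
    rw [inv_lt_comm₀ (by positivity) hpos]
    calc (|b x| - linftyNorm b)⁻¹ < n := hn
    _ < n + 1 := by linarith
  have := hx n
  linarith

lemma linfty_locallyIntegrable {b : ℝ → ℝ} (hb : MemLinfty b) :
    MeasureTheory.LocallyIntegrable b := by
  rw [MeasureTheory.locallyIntegrable_iff]
  intro k hk
  refine MeasureTheory.Measure.integrableOn_of_bounded (M := linftyNorm b) hk.measure_lt_top.ne hb.1 ?_
  exact MeasureTheory.ae_restrict_of_ae ((abs_le_linftyNorm hb).mono fun x hx => by
    simpa [Real.norm_eq_abs] using hx)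

/-- The set of points near which some interval average of `|h|` exceeds `l`. -/
def badSet (h : ℝ → ℝ) (l : ℝ) : Set ℝ :=
  {x | ∃ a b : ℝ, a < b ∧ x ∈ Set.Icc a b ∧ l < (b - a)⁻¹ * ∫ t in a..b, |h t|}

lemma isOpen_badSet {h : ℝ → ℝ} (hh : MeasureTheory.LocallyIntegrable h) (l : ℝ) :
    IsOpen (badSet h l) := by
  rw [isOpen_iff_mem_nhds]
  rintro x ⟨a, b, hab, hx, hl⟩
  set c := ∫ t in a..b, |h t| with hc
  have hcont : ContinuousAt (fun ε : ℝ => (b - a + 2*ε)⁻¹ * c) 0 := by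
    apply ContinuousAt.mul _ continuousAt_const
    apply ContinuousAt.inv₀ (by fun_prop)
    simp only [mul_zero, add_zero]
    linarith
  have hval : l < (fun ε : ℝ => (b - a + 2*ε)⁻¹ * c) 0 := by
    simpa using hl
  have hev : ∀ᶠ ε in nhds (0:ℝ), l < (b - a + 2*ε)⁻¹ * c :=
    hcont.eventually (eventually_gt_nhds hval)
  obtain ⟨δ, hδpos, hδ⟩ := Metric.eventually_nhds_iff.1 hev
  set ε := δ/2 with hε
  have hεpos : 0 < ε := by positivity
  have hεlt : l < (b - a + 2*ε)⁻¹ * c := hδ (by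
    simp only [dist_zero_right, Real.norm_eq_abs, abs_of_pos hεpos, hε]; rw [abs_of_pos (by positivity : (0:ℝ) < δ/2)]; linarith)
  refine Filter.mem_of_superset (Ioo_mem_nhds (show a - ε < x by cases hx; linarith)
    (show x < b + ε by cases hx; linarith)) ?_
  intro y hy
  refine ⟨a - ε, b + ε, by linarith, ⟨hy.1.le, hy.2.le⟩, ?_⟩
  have hmono : c ≤ ∫ t in (a-ε)..(b+ε), |h t| :=
    integral_abs_mono hh (by linarith) hab.le (by linarith)
  have harith : (b + ε - (a - ε)) = b - a + 2*ε := by ring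
  rw [harith]
  calc l < (b - a + 2*ε)⁻¹ * c := hεlt
  _ ≤ (b - a + 2*ε)⁻¹ * ∫ t in (a-ε)..(b+ε), |h t| := by
      apply mul_le_mul_of_nonneg_left hmono
      have : (0:ℝ) < b - a + 2*ε := by linarith
      positivity

lemma badSet_antitone {h : ℝ → ℝ} {l l' : ℝ} (hll' : l ≤ l') :
    badSet h l' ⊆ badSet h l := by
  rintro x ⟨a, b, hab, hx, hl⟩
  exact ⟨a, b, hab, hx, lt_of_le_of_lt hll' hl⟩

end BLOaux
namespace BLOaux

open MeasureTheory

lemma setIntegral_abs_le_integral_abs {h : ℝ → ℝ} (hh : Integrable h) (s : Set ℝ) :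
    ∫ t in s, |h t| ≤ ∫ t, |h t| :=
  setIntegral_le_integral hh.abs (ae_of_all _ fun t => abs_nonneg _)

/-- Weak (1,1) bound for the bad sets. -/
lemma measure_badSet_le {h : ℝ → ℝ} (hh : Integrable h) {l : ℝ} (hl : 0 < l) :
    volume (badSet h l) ≤ ENNReal.ofReal (4 * l⁻¹ * ∫ t, |h t|) := by
  classical
  set T := ∫ t, |h t| with hT
  have hT0 : 0 ≤ T := integral_nonneg fun t => abs_nonneg _
  have hch : ∀ i : ↥(badSet h l), ∃ q : ℝ × ℝ, q.1 < q.2 ∧ (i : ℝ) ∈ Set.Icc q.1 q.2 ∧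
      l < (q.2 - q.1)⁻¹ * ∫ t in q.1..q.2, |h t| := by
    rintro ⟨y, a, b, hab, hy, hb⟩
    exact ⟨(a, b), hab, hy, hb⟩
  choose q hq1 hq2 hq3 using hch
  set A : ↥(badSet h l) → ℝ := fun i => (q i).1 with hA
  set B : ↥(badSet h l) → ℝ := fun i => (q i).2 with hB
  set c : ↥(badSet h l) → ℝ := fun i => (A i + B i)/2 with hc
  set r : ↥(badSet h l) → ℝ := fun i => (B i - A i)/2 with hr
  have hrpos : ∀ i, 0 < r i := fun i => by
    have h := hq1 i
    simp only [hr]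
    linarith
  have hIcc : ∀ i, Set.Icc (A i) (B i) = Metric.closedBall (c i) (r i) := by
    intro i
    rw [Real.closedBall_eq_Icc]
    congr 1 <;> simp only [hc, hr] <;> ring
  -- key length bound
  have hlen : ∀ i, l * (B i - A i) < ∫ t in Set.Ioc (A i) (B i), |h t| := by
    intro i
    have h3 := hq3 i
    have hpos : 0 < B i - A i := by linarith [hq1 i]
    rw [← intervalIntegral.integral_of_le (hq1 i).le]
    calc l * (B i - A i) = ((B i - A i)⁻¹ * (l * (B i - A i))) * (B i - A i) := by
          field_simp
    _ < ((B i - A i)⁻¹ * ∫ t in (A i)..(B i), |h t|) * (B i - A i) := by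
          apply mul_lt_mul_of_pos_right _ hpos
          apply mul_lt_mul_of_pos_left _ (by positivity)
          calc l * (B i - A i) < ((B i - A i)⁻¹ * ∫ t in (A i)..(B i), |h t|) * (B i - A i) := by
                nlinarith [hq3 i]
          _ = ∫ t in (A i)..(B i), |h t| := by field_simp
    _ = ∫ t in (A i)..(B i), |h t| := by field_simp
  have hrR : ∀ i, r i ≤ T / (2 * l) := by
    intro i
    have h1 := hlen i
    have h2 : ∫ t in Set.Ioc (A i) (B i), |h t| ≤ T := setIntegral_abs_le_integral_abs hh _
    have := hrpos i
    rw [div_le_div_iff₀ (by linarith [hrpos i]) (by positivity)]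
    simp only [hr] at *
    nlinarith
  obtain ⟨u, -, u_disj, u_cov⟩ :=
    Vitali.exists_disjoint_subfamily_covering_enlargement_closedBall Set.univ c r
      (T / (2*l)) (fun i _ => hrR i) 4 (by norm_num)
  have u_count : u.Countable := by
    apply u_disj.countable_of_nonempty_interior
    intro i _
    rw [interior_closedBall _ (hrpos i).ne']
    exact Metric.nonempty_ball.2 (hrpos i)
  have hcover : badSet h l ⊆ ⋃ i ∈ u, Metric.closedBall (c i) (4 * r i) := by
    intro y hy
    set i : ↥(badSet h l) := ⟨y, hy⟩ with hi
    have hyi : y ∈ Metric.closedBall (c i) (r i) := by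
      rw [← hIcc i]; exact hq2 i
    obtain ⟨j, hj, hsub⟩ := u_cov i (Set.mem_univ i)
    exact Set.mem_biUnion hj (hsub hyi)
  calc volume (badSet h l) ≤ volume (⋃ i ∈ u, Metric.closedBall (c i) (4 * r i)) :=
        measure_mono hcover
  _ ≤ ∑' i : ↥u, volume (Metric.closedBall (c i) (4 * r i)) :=
        measure_biUnion_le volume u_count _
  _ ≤ ∑' i : ↥u, ENNReal.ofReal (4 * l⁻¹) * ∫⁻ t in Set.Ioc (A i) (B i), ENNReal.ofReal |h t| := by
        apply ENNReal.tsum_le_tsum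
        intro i
        rw [Real.volume_closedBall]
        have heq : ENNReal.ofReal (∫ t in Set.Ioc (A (i:↥(badSet h l))) (B i), |h t|)
            = ∫⁻ t in Set.Ioc (A i) (B i), ENNReal.ofReal |h t| :=
          ofReal_integral_eq_lintegral_ofReal (hh.abs.integrableOn)
            (ae_of_all _ fun t => abs_nonneg _)
        rw [← heq, ← ENNReal.ofReal_mul (by positivity)]
        apply ENNReal.ofReal_le_ofReal
        have h1 := hlen (i : ↥(badSet h l))
        have h2 : 2 * (4 * r (i:↥(badSet h l))) = 4 * (B i - A i) := by
          simp only [hr]; ring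
        rw [h2]
        have hle : B (i:↥(badSet h l)) - A i ≤ l⁻¹ * ∫ t in Set.Ioc (A i) (B i), |h t| := by
          rw [le_inv_mul_iff₀ hl]
          linarith [hlen (i : ↥(badSet h l))]
        nlinarith [hle]
  _ = ENNReal.ofReal (4 * l⁻¹) * ∑' i : ↥u, ∫⁻ t in Set.Ioc (A i) (B i), ENNReal.ofReal |h t| :=
        ENNReal.tsum_mul_left
  _ ≤ ENNReal.ofReal (4 * l⁻¹) * ENNReal.ofReal T := by
        apply mul_le_mul_right
        haveI := u_count.to_subtype
        have hdisj : Pairwise (Function.onFun Disjoint fun i : ↥u => Set.Ioc (A i) (B i)) := by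
          intro i j hij
          have hne : (i : ↥(badSet h l)) ≠ (j : ↥(badSet h l)) := Subtype.coe_injective.ne hij
          have := u_disj i.2 j.2 hne
          refine Disjoint.mono ?_ ?_ this <;>
            · refine le_trans Set.Ioc_subset_Icc_self ?_
              rw [hIcc]
        rw [← lintegral_iUnion (fun i => measurableSet_Ioc) hdisj]
        calc ∫⁻ t in ⋃ i : ↥u, Set.Ioc (A i) (B i), ENNReal.ofReal |h t|
            ≤ ∫⁻ t, ENNReal.ofReal |h t| := setLIntegral_le_lintegral _ _
        _ = ENNReal.ofReal T :=
            (ofReal_integral_eq_lintegral_ofReal hh.abs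
              (ae_of_all _ fun t => abs_nonneg _)).symm
  _ = ENNReal.ofReal (4 * l⁻¹ * T) := by
        rw [← ENNReal.ofReal_mul (by positivity)]

end BLOaux
namespace BLOaux

open MeasureTheory

set_option maxHeartbeats 1000000 in
/-- Main per-interval estimate. -/
lemma lowOsc_le {α : ℝ} (hα : 0 < α) {w g : ℝ → ℝ} (hw : MemLinfty w)
    (hg : MeasureTheory.LocallyIntegrable g) (hnz : ¬ (g =ᵐ[volume] (0 : ℝ → ℝ)))
    (hlog : MeasureTheory.LocallyIntegrable (fun x => Real.log (maxFn g x)))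
    {s t : ℝ} (hst : s < t) :
    lowOsc (fun x => α * Real.log (maxFn g x) + w x) s t
      ≤ 24 * α + 2 * linftyNorm w := by
  classical
  set f : ℝ → ℝ := fun x => α * Real.log (maxFn g x) + w x with hf
  set N := linftyNorm w with hN
  have hN0 : 0 ≤ N := linftyNorm_nonneg w
  have hwa : ∀ᵐ x ∂volume, |w x| ≤ N := abs_le_linftyNorm hw
  set L := t - s with hL
  have hL0 : 0 < L := by simp only [hL]; linarith
  -- near and far parts
  set g₁ : ℝ → ℝ := (Set.Icc (s - L) (t + L)).indicator g with hg₁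
  set g₂ : ℝ → ℝ := fun x => g x - g₁ x with hg₂
  have hg₁int : Integrable g₁ :=
    (hg.integrableOn_isCompact isCompact_Icc).integrable_indicator measurableSet_Icc
  have hg₂loc : MeasureTheory.LocallyIntegrable g₂ :=
    hg.sub hg₁int.locallyIntegrable
  have habs1 : ∀ x, |g₁ x| ≤ |g x| := by
    intro x
    by_cases hx : x ∈ Set.Icc (s - L) (t + L) <;>
      simp [hg₁, Set.indicator_of_mem, Set.indicator_of_notMem, hx, abs_nonneg, le_refl]
  have habs2 : ∀ x, |g₂ x| ≤ |g x| := by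
    intro x
    by_cases hx : x ∈ Set.Icc (s - L) (t + L) <;>
      simp [hg₂, hg₁, Set.indicator_of_mem, Set.indicator_of_notMem, hx, abs_nonneg, le_refl]
  have htri : ∀ x, |g x| ≤ |g₁ x| + |g₂ x| := by
    intro x
    have : g x = g₁ x + g₂ x := by simp [hg₂]
    rw [this]; exact abs_add_le _ _
  have hg₂zero : ∀ x ∈ Set.Icc (s - L) (t + L), g₂ x = 0 := by
    intro x hx
    simp [hg₂, hg₁, Set.indicator_of_mem hx]
  -- integrability on intervals
  have hIntOn : ∀ (h' : ℝ → ℝ), MeasureTheory.LocallyIntegrable h' → ∀ a' b' : ℝ,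
      IntegrableOn (fun x => |h' x|) (Set.Ioc a' b') := fun h' hh' a' b' =>
    ((hh'.integrableOn_isCompact isCompact_Icc).mono_set Set.Ioc_subset_Icc_self).abs
  have hII : ∀ (h' : ℝ → ℝ), MeasureTheory.LocallyIntegrable h' → ∀ a' b' : ℝ, a' ≤ b' →
      IntervalIntegrable (fun x => |h' x|) volume a' b' := by
    intro h' hh' a' b' hab
    rw [intervalIntegrable_iff_integrableOn_Ioc_of_le hab]
    exact hIntOn h' hh' a' b'
  -- average subadditivity
  have havg : ∀ a' b' : ℝ, a' < b' →
      (b' - a')⁻¹ * ∫ u in a'..b', |g u| ≤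
        ((b' - a')⁻¹ * ∫ u in a'..b', |g₁ u|) + ((b' - a')⁻¹ * ∫ u in a'..b', |g₂ u|) := by
    intro a' b' hab
    have h1 : ∫ u in a'..b', |g u| ≤ ∫ u in a'..b', (|g₁ u| + |g₂ u|) := by
      apply intervalIntegral.integral_mono_on hab.le (hII g hg a' b' hab.le)
        ((hII g₁ hg₁int.locallyIntegrable a' b' hab.le).add (hII g₂ hg₂loc a' b' hab.le))
      intro x _; exact htri x
    rw [intervalIntegral.integral_add (hII g₁ hg₁int.locallyIntegrable a' b' hab.le)
      (hII g₂ hg₂loc a' b' hab.le)] at h1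
    rw [← mul_add]
    apply mul_le_mul_of_nonneg_left h1
    have : (0:ℝ) < b' - a' := by linarith
    positivity
  -- the average of |g| over the tripled interval
  set A : ℝ := (t + L - (s - L))⁻¹ * ∫ u in (s - L)..(t + L), |g u| with hAdef
  have hA0 : 0 ≤ A := by
    have h1 : 0 ≤ ∫ u in (s - L)..(t + L), |g u| :=
      intervalIntegral.integral_nonneg (by linarith) (fun u _ => abs_nonneg _)
    have h2 : (0:ℝ) < t + L - (s - L) := by linarith
    positivity
  have hT₁ : ∫ u, |g₁ u| = 3 * L * A := by
    have h1 : (fun u => |g₁ u|) = (Set.Icc (s - L) (t + L)).indicator (fun u => |g u|) := by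
      funext u
      by_cases hu : u ∈ Set.Icc (s - L) (t + L) <;>
        simp [hg₁, Set.indicator_of_mem, Set.indicator_of_notMem, hu]
    rw [h1, integral_indicator measurableSet_Icc, integral_Icc_eq_integral_Ioc,
      ← intervalIntegral.integral_of_le (by linarith : s - L ≤ t + L)]
    have h2 : t + L - (s - L) = 3 * L := by ring
    rw [hAdef, h2]
    field_simp
  have hT₁nonneg : 0 ≤ ∫ u, |g₁ u| := integral_nonneg fun u => abs_nonneg _
  -- the far set
  set farSet : Set ℝ := {c | ∃ a' b' : ℝ, a' < b' ∧ (Set.Icc a' b' ∩ Set.Icc s t).Nonempty ∧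
      c = (b' - a')⁻¹ * ∫ u in a'..b', |g₂ u|} with hfarSet
  have far0 : (0:ℝ) ∈ farSet := by
    refine ⟨s, t, hst, ⟨s, ⟨le_refl s, hst.le⟩, ⟨le_refl s, hst.le⟩⟩, ?_⟩
    have : ∫ u in s..t, |g₂ u| = 0 := by
      have : Set.EqOn (fun u => |g₂ u|) (fun _ => (0:ℝ)) (Set.uIcc s t) := by
        intro u hu
        rw [Set.uIcc_of_le hst.le] at hu
        have : u ∈ Set.Icc (s - L) (t + L) := ⟨by linarith [hu.1], by linarith [hu.2]⟩
        simp [hg₂zero u this]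
      rw [intervalIntegral.integral_congr this]
      simp
    rw [this]; ring
  have hfar_nonneg : ∀ c ∈ farSet, 0 ≤ c := by
    rintro c ⟨a', b', hab, -, rfl⟩
    have h1 : 0 ≤ ∫ u in a'..b', |g₂ u| :=
      intervalIntegral.integral_nonneg hab.le (fun u _ => abs_nonneg _)
    have h2 : (0:ℝ) < b' - a' := by linarith
    positivity
  -- key far bound
  have hfar_key : ∀ c ∈ farSet, ∀ x ∈ Set.Icc s t, BddAbove (MXset g x) →
      c ≤ 2 * maxFn g x := by
    rintro c ⟨a', b', hab, ⟨z, hz1, hz2⟩, rfl⟩ x hx hbdd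
    have hmax0 : 0 ≤ maxFn g x := maxFn_nonneg g x
    by_cases hsub : Set.Icc a' b' ⊆ Set.Icc (s - L) (t + L)
    · have : ∫ u in a'..b', |g₂ u| = 0 := by
        have heq : Set.EqOn (fun u => |g₂ u|) (fun _ => (0:ℝ)) (Set.uIcc a' b') := by
          intro u hu
          rw [Set.uIcc_of_le hab.le] at hu
          simp [hg₂zero u (hsub hu)]
        rw [intervalIntegral.integral_congr heq]; simp
      rw [this]
      simp only [mul_zero]
      linarith
    · -- J leaves the tripled interval, so it is long
      have hlong : L ≤ b' - a' := by
        rw [Set.not_subset] at hsub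
        obtain ⟨y, hy, hy3⟩ := hsub
        simp only [Set.mem_Icc, not_and_or, not_le] at hy3
        rcases hy3 with hy3 | hy3
        · -- y < s - L ; s ≤ z ≤ b', a' ≤ y
          have h1 := hz2.1
          have h2 := hz1.2
          have h3 := hy.1
          linarith
        · -- t + L < y ; a' ≤ z ≤ t, y ≤ b'
          have h1 := hz2.2
          have h2 := hz1.1
          have h3 := hy.2
          linarith
      set a'' := min a' s with ha''
      set b'' := max b' t with hb''
      have hab'' : a'' < b'' := lt_of_le_of_lt (min_le_left _ _)
        (lt_of_lt_of_le hab (le_max_left _ _))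
      have hd : (b'' - a'')⁻¹ * ∫ u in a''..b'', |g u| ∈ MXset g x := by
        refine ⟨a'', b'', hab'', ⟨?_, ?_⟩, rfl⟩
        · exact le_trans (min_le_right _ _) hx.1
        · exact le_trans hx.2 (le_max_right _ _)
      have hdle : (b'' - a'')⁻¹ * ∫ u in a''..b'', |g u| ≤ maxFn g x := le_maxFn hbdd hd
      have hdnn : 0 ≤ (b'' - a'')⁻¹ * ∫ u in a''..b'', |g u| := MXset_mem_nonneg hd
      -- compare the two averages
      have hI1 : ∫ u in a'..b', |g₂ u| ≤ ∫ u in a'..b', |g u| := by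
        apply intervalIntegral.integral_mono_on hab.le (hII g₂ hg₂loc a' b' hab.le)
          (hII g hg a' b' hab.le)
        intro u _; exact habs2 u
      have hI2 : ∫ u in a'..b', |g u| ≤ ∫ u in a''..b'', |g u| :=
        integral_abs_mono hg (min_le_left _ _) hab.le (le_max_left _ _)
      have hsb' : s ≤ b' := le_trans hz2.1 hz1.2
      have ha't : a' ≤ t := le_trans hz1.1 hz2.2
      have hlen'' : b'' - a'' ≤ 2 * (b' - a') := by
        have key : b'' - a'' ≤ (b' - a') + (t - s) := by
          simp only [hb'', ha'']
          rcases le_total a' s with h | h <;> rcases le_total b' t with h' | h'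
          · rw [min_eq_left h, max_eq_right h']; linarith
          · rw [min_eq_left h, max_eq_left h']; linarith
          · rw [min_eq_right h, max_eq_right h']; linarith
          · rw [min_eq_right h, max_eq_left h']; linarith
        have hLts : L = t - s := rfl
        linarith
      -- conclude
      have hpos' : (0:ℝ) < b' - a' := by linarith
      have hpos'' : (0:ℝ) < b'' - a'' := by linarith
      calc (b' - a')⁻¹ * ∫ u in a'..b', |g₂ u|
          ≤ (b' - a')⁻¹ * ∫ u in a''..b'', |g u| := by
            apply mul_le_mul_of_nonneg_left (le_trans hI1 hI2) (by positivity)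
      _ = ((b'' - a'') * (b' - a')⁻¹) * ((b'' - a'')⁻¹ * ∫ u in a''..b'', |g u|) := by
            field_simp
      _ ≤ 2 * ((b'' - a'')⁻¹ * ∫ u in a''..b'', |g u|) := by
            apply mul_le_mul_of_nonneg_right _ hdnn
            rw [mul_inv_le_iff₀ hpos']
            linarith
      _ ≤ 2 * maxFn g x := by linarith [hdle]
  -- w-integral bound on [s,t]
  have hwInt : IntegrableOn w (Set.Ioc s t) :=
    ((linfty_locallyIntegrable hw).integrableOn_isCompact isCompact_Icc).mono_set
      Set.Ioc_subset_Icc_self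
  have hwavg : (t - s)⁻¹ * ∫ u in s..t, w u ≤ N := by
    rw [intervalIntegral.integral_of_le hst.le]
    have h1 : ∫ u in Set.Ioc s t, w u ≤ ∫ _ in Set.Ioc s t, N := by
      apply integral_mono_ae hwInt
        ((integrableOn_const_iff).2 (Or.inr (by rw [Real.volume_Ioc]; exact ENNReal.ofReal_lt_top)))
      exact ae_restrict_of_ae (hwa.mono fun x hx => le_trans (le_abs_self _) hx)
    have h2 : ∫ _ in Set.Ioc s t, N = (t - s) * N := by
      rw [setIntegral_const, Real.volume_real_Ioc, smul_eq_mul,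
        max_eq_left (by linarith : (0:ℝ) ≤ t - s)]
    rw [inv_mul_le_iff₀ (by linarith : (0:ℝ) < t - s)]
    calc ∫ u in Set.Ioc s t, w u ≤ (t - s) * N := h2 ▸ h1
    _ = (t - s) * N := rfl
  rw [lowOsc]
  by_cases hBdd : BddAbove farSet
  · -- bounded far part
    set Bsup := sSup farSet with hBsupdef
    have hfar_le : ∀ c ∈ farSet, c ≤ Bsup := fun c hc => le_csSup hBdd hc
    have hBsup0 : 0 ≤ Bsup := le_csSup hBdd far0
    set Z := ⋂ n : ℕ, badSet g₁ ((n : ℝ) + 1) with hZdef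
    have hZ0 : volume Z = 0 := by
      have hb : ∀ n : ℕ, volume Z ≤ ENNReal.ofReal (4 * ((n:ℝ)+1)⁻¹ * ∫ u, |g₁ u|) := by
        intro n
        refine le_trans (measure_mono (Set.iInter_subset _ n)) ?_
        have h4 : ((n:ℝ)+1)⁻¹ = (((n:ℝ)+1))⁻¹ := rfl
        have := measure_badSet_le hg₁int (show (0:ℝ) < (n:ℝ)+1 by positivity)
        simpa using this
      have htends : Filter.Tendsto (fun n : ℕ => ENNReal.ofReal (4 * ((n:ℝ)+1)⁻¹ * ∫ u, |g₁ u|))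
          Filter.atTop (nhds 0) := by
        rw [← ENNReal.ofReal_zero]
        apply ENNReal.tendsto_ofReal
        have h1 : Filter.Tendsto (fun n : ℕ => ((n:ℝ)+1)⁻¹) Filter.atTop (nhds 0) :=
          tendsto_one_div_add_atTop_nhds_zero_nat.congr (fun n => by rw [one_div])
        have h2 := (h1.const_mul 4).mul_const (∫ u, |g₁ u|)
        simpa using h2
      have : volume Z ≤ 0 := ge_of_tendsto' htends hb
      exact le_antisymm this (by simp)
    -- good points
    have hgood : ∀ x, x ∈ Set.Icc s t → x ∉ Z →
        BddAbove (MXset g x) ∧ max A (Bsup/2) ≤ maxFn g x := by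
      intro x hx hxZ
      obtain ⟨n, hn⟩ : ∃ n : ℕ, x ∉ badSet g₁ ((n:ℝ)+1) := by
        by_contra hcon
        push_neg at hcon
        exact hxZ (Set.mem_iInter.2 hcon)
      have hg₁bd : ∀ a' b' : ℝ, a' < b' → x ∈ Set.Icc a' b' →
          (b'-a')⁻¹ * ∫ u in a'..b', |g₁ u| ≤ (n:ℝ)+1 := by
        intro a' b' h1 h2
        by_contra h3
        exact hn ⟨a', b', h1, h2, not_le.1 h3⟩
      have hbdd : BddAbove (MXset g x) := by
        refine ⟨(n:ℝ)+1+Bsup, ?_⟩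
        rintro c ⟨a', b', h1, h2, rfl⟩
        have h4 := havg a' b' h1
        have h5 : (b'-a')⁻¹ * ∫ u in a'..b', |g₂ u| ∈ farSet :=
          ⟨a', b', h1, ⟨x, h2, hx⟩, rfl⟩
        have h6 := hfar_le _ h5
        have h7 := hg₁bd a' b' h1 h2
        linarith
      have hAle : A ≤ maxFn g x := le_maxFn hbdd
        ⟨s - L, t + L, by linarith, ⟨by linarith [hx.1], by linarith [hx.2]⟩, hAdef⟩
      have hBle : Bsup ≤ 2 * maxFn g x :=
        csSup_le ⟨0, far0⟩ (fun c hc => hfar_key c hc x hx hbdd)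
      exact ⟨hbdd, max_le hAle (by linarith)⟩
    set m₀ := max A (Bsup/2) with hm₀def
    have hm₀0 : 0 ≤ m₀ := le_trans hA0 (le_max_left _ _)
    have hm₀pos : 0 < m₀ := by
      rcases hm₀0.lt_or_eq with h | h
      · exact h
      exfalso
      have hA_eq : A = 0 := le_antisymm (h ▸ le_max_left _ _) hA0
      have hB2 : Bsup/2 ≤ 0 := h ▸ le_max_right _ _
      have hB_eq : Bsup = 0 := le_antisymm (by linarith) hBsup0
      apply hnz
      have hzero : ∀ n : ℕ, ∀ᵐ u ∂(volume.restrict (Set.Ioc (s - L - n) (t + L + n))),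
          g u = 0 := by
        intro n
        have hn0 : (0:ℝ) ≤ n := Nat.cast_nonneg n
        have h1 : s - L - n < t + L + n := by linarith
        have hintz : ∫ u in Set.Ioc (s - L - n) (t + L + n), |g u| = 0 := by
          refine le_antisymm ?_ (integral_nonneg fun u => abs_nonneg _)
          rw [← intervalIntegral.integral_of_le h1.le]
          have h2 := havg _ _ h1
          have h3 : ∫ u in (s - L - n)..(t + L + n), |g₁ u| = 0 := by
            refine le_antisymm ?_
              (intervalIntegral.integral_nonneg h1.le fun u _ => abs_nonneg _)
            rw [intervalIntegral.integral_of_le h1.le]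
            calc ∫ u in Set.Ioc (s - L - n) (t + L + n), |g₁ u| ≤ ∫ u, |g₁ u| :=
                  setIntegral_abs_le_integral_abs hg₁int _
            _ = 0 := by rw [hT₁, hA_eq]; ring
          have h5 : ((t + L + n) - (s - L - n))⁻¹ * ∫ u in (s - L - n)..(t + L + n), |g₂ u| ≤ 0 := by
            have hmem : ((t + L + n) - (s - L - n))⁻¹ * ∫ u in (s - L - n)..(t + L + n), |g₂ u|
                ∈ farSet :=
              ⟨s - L - n, t + L + n, h1, ⟨s, ⟨by linarith, by linarith⟩, le_refl s, hst.le⟩, rfl⟩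
            linarith [hfar_le _ hmem]
          have hpos : (0:ℝ) < (t + L + n) - (s - L - n) := by linarith
          have h6 : ((t + L + n) - (s - L - n))⁻¹ * ∫ u in (s - L - n)..(t + L + n), |g u| ≤ 0 := by
            have h7 : ((t + L + n) - (s - L - n))⁻¹ * ∫ u in (s - L - n)..(t + L + n), |g₁ u| = 0 := by
              rw [h3, mul_zero]
            linarith [h2]
          have h8 : (0:ℝ) ≤ ∫ u in (s - L - n)..(t + L + n), |g u| :=
            intervalIntegral.integral_nonneg h1.le fun u _ => abs_nonneg (g u)
          nlinarith [h6, inv_pos.2 hpos, h8]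
        have habs0 := (integral_eq_zero_iff_of_nonneg_ae
          (ae_of_all _ fun u => abs_nonneg (g u)) (hIntOn g hg _ _)).1 hintz
        filter_upwards [habs0] with u hu
        exact abs_eq_zero.1 hu
      have hnull : volume {u : ℝ | g u ≠ 0} = 0 := by
        have hcover : {u : ℝ | g u ≠ 0} ⊆
            ⋃ n : ℕ, {u : ℝ | ¬ g u = 0} ∩ Set.Ioc (s - L - n) (t + L + n) := by
          intro u hu
          obtain ⟨n, hn⟩ := exists_nat_gt (max (s - L - u) (u - t - L))
          refine Set.mem_iUnion.2 ⟨n, hu, ?_, ?_⟩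
          · have := le_max_left (s - L - u) (u - t - L)
            linarith [lt_of_le_of_lt this hn]
          · have := le_max_right (s - L - u) (u - t - L)
            linarith [lt_of_le_of_lt this hn]
        refine measure_mono_null hcover (measure_iUnion_null fun n => ?_)
        have := hzero n
        rw [MeasureTheory.ae_iff, MeasureTheory.Measure.restrict_apply' measurableSet_Ioc] at this
        exact this
      rw [Filter.EventuallyEq, MeasureTheory.ae_iff]
      simpa using hnull
    -- the threshold level
    set l₀ := max (12 * A) Bsup with hl₀def
    have h12A : 12 * A ≤ l₀ := le_max_left _ _
    have hBl : Bsup ≤ l₀ := le_max_right _ _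
    have hl₀m : m₀ ≤ l₀ := by
      apply max_le
      · linarith
      · linarith
    have hl₀pos : 0 < l₀ := lt_of_lt_of_le hm₀pos hl₀m
    have hl₀le : l₀ ≤ 12 * m₀ := by
      apply max_le
      · have : A ≤ m₀ := le_max_left _ _
        linarith
      · have : Bsup / 2 ≤ m₀ := le_max_right _ _
        linarith
    -- essential infimum lower bound
    have hinf : α * Real.log m₀ - N ≤ essInfIcc f s t := by
      apply le_essInfIcc hst
      have h1 : ∀ᵐ x ∂(volume.restrict (Set.Icc s t)), |w x| ≤ N := ae_restrict_of_ae hwa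
      have h2 : ∀ᵐ x ∂(volume.restrict (Set.Icc s t)), x ∈ Set.Icc s t :=
        ae_restrict_mem measurableSet_Icc
      have h3 : ∀ᵐ x ∂(volume.restrict (Set.Icc s t)), x ∉ Z :=
        ae_restrict_of_ae (measure_eq_zero_iff_ae_notMem.1 hZ0)
      filter_upwards [h1, h2, h3] with x hx1 hx2 hx3
      obtain ⟨hbdd, hm⟩ := hgood x hx2 hx3
      have hlogle : Real.log m₀ ≤ Real.log (maxFn g x) := Real.log_le_log hm₀pos hm
      have h4 : α * Real.log m₀ ≤ α * Real.log (maxFn g x) :=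
        mul_le_mul_of_nonneg_left hlogle hα.le
      show α * Real.log m₀ - N ≤ α * Real.log (maxFn g x) + w x
      linarith [neg_abs_le (w x)]
    -- layer cake for the positive part above the threshold
    set c₀ := Real.log (2 * l₀) with hc₀def
    set U : ℝ → ℝ := fun x => max (Real.log (maxFn g x) - c₀) 0 with hUdef
    set μ' := volume.restrict (Set.Ioc s t) with hμ'def
    have hμ'fin : μ' Set.univ < ⊤ := by
      rw [hμ'def, Measure.restrict_apply MeasurableSet.univ, Set.univ_inter, Real.volume_Ioc]
      exact ENNReal.ofReal_lt_top
    have hconstInt : ∀ c : ℝ, Integrable (fun _ => c) μ' := by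
      intro c
      apply integrable_const_iff.2
      right
      exact ⟨hμ'fin⟩
    have hlogInt : IntegrableOn (fun x => Real.log (maxFn g x)) (Set.Ioc s t) :=
      (hlog.integrableOn_isCompact isCompact_Icc).mono_set Set.Ioc_subset_Icc_self
    have hUint : Integrable U μ' := by
      have h1 : Integrable (fun x => Real.log (maxFn g x) - c₀) μ' :=
        hlogInt.sub (hconstInt c₀)
      exact h1.pos_part
    have hU0 : 0 ≤ᵐ[μ'] U := ae_of_all _ fun x => le_max_right _ _
    have hlayer := hUint.integral_eq_integral_meas_lt hU0
    have hmeas : ∀ t' ∈ Set.Ioi (0:ℝ), (μ' {x | t' < U x}).toReal ≤ (t - s) * Real.exp (-t') := by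
      intro t' ht'
      have ht'0 : 0 < t' := ht'
      have hsub : {x | t' < U x} ∩ Set.Ioc s t ⊆ badSet g₁ (l₀ * Real.exp t') ∪ Z := by
        rintro x ⟨hxu, hxI⟩
        by_cases hxZ : x ∈ Z
        · exact Or.inr hxZ
        left
        have hxIcc : x ∈ Set.Icc s t := ⟨hxI.1.le, hxI.2⟩
        obtain ⟨hbdd, hm⟩ := hgood x hxIcc hxZ
        have hmaxpos : 0 < maxFn g x := lt_of_lt_of_le hm₀pos hm
        have hlval : c₀ + t' < Real.log (maxFn g x) := by
          have hxu' : t' < max (Real.log (maxFn g x) - c₀) 0 := hxu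
          by_contra hcon
          push_neg at hcon
          have : max (Real.log (maxFn g x) - c₀) 0 ≤ t' := max_le (by linarith) ht'0.le
          linarith
        have hkey : 2 * (l₀ * Real.exp t') < maxFn g x := by
          have h2pos : (0:ℝ) < 2 * (l₀ * Real.exp t') := by positivity
          have hloga : Real.log (2 * (l₀ * Real.exp t')) = c₀ + t' := by
            rw [show (2:ℝ) * (l₀ * Real.exp t') = (2 * l₀) * Real.exp t' by ring,
              Real.log_mul (by positivity) (Real.exp_ne_zero t'), Real.log_exp, hc₀def]
          rw [← hloga] at hlval
          exact (Real.log_lt_log_iff h2pos hmaxpos).1 hlval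
        rw [maxFn_eq] at hkey
        obtain ⟨c', hc'mem, hc'⟩ := exists_lt_of_lt_csSup (MXset_nonempty g x) hkey
        obtain ⟨a', b', h1, h2, rfl⟩ := hc'mem
        refine ⟨a', b', h1, h2, ?_⟩
        have h4 := havg a' b' h1
        have h5 : (b'-a')⁻¹ * ∫ v in a'..b', |g₂ v| ≤ Bsup :=
          hfar_le _ ⟨a', b', h1, ⟨x, h2, hxIcc⟩, rfl⟩
        have hexp1 : (1:ℝ) ≤ Real.exp t' := Real.one_le_exp ht'0.le
        have hBle' : Bsup ≤ l₀ * Real.exp t' := le_trans hBl (by nlinarith)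
        linarith
      have hμ'le : μ' {x | t' < U x} ≤ ENNReal.ofReal ((t - s) * Real.exp (-t')) := by
        rw [hμ'def, Measure.restrict_apply' measurableSet_Ioc]
        calc volume ({x | t' < U x} ∩ Set.Ioc s t)
            ≤ volume (badSet g₁ (l₀ * Real.exp t') ∪ Z) := measure_mono hsub
        _ ≤ volume (badSet g₁ (l₀ * Real.exp t')) + volume Z := measure_union_le _ _
        _ = volume (badSet g₁ (l₀ * Real.exp t')) := by rw [hZ0, add_zero]
        _ ≤ ENNReal.ofReal (4 * (l₀ * Real.exp t')⁻¹ * ∫ v, |g₁ v|) :=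
              measure_badSet_le hg₁int (by positivity)
        _ ≤ ENNReal.ofReal ((t - s) * Real.exp (-t')) := by
              apply ENNReal.ofReal_le_ofReal
              rw [hT₁, Real.exp_neg]
              have hLts : L = t - s := rfl
              rw [← hLts]
              have he : (0:ℝ) < Real.exp t' := Real.exp_pos t'
              rw [mul_inv]
              have h12 : 12 * A * l₀⁻¹ ≤ 1 := by
                have := mul_le_mul_of_nonneg_right h12A (inv_nonneg.2 hl₀pos.le)
                rw [mul_inv_cancel₀ hl₀pos.ne'] at this
                exact this
              have hrw : 4 * (l₀⁻¹ * (Real.exp t')⁻¹) * (3 * L * A)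
                  = (12 * A * l₀⁻¹) * (L * (Real.exp t')⁻¹) := by ring
              rw [hrw]
              have hLe : (0:ℝ) ≤ L * (Real.exp t')⁻¹ := by positivity
              nlinarith
      exact ENNReal.toReal_le_of_le_ofReal (by positivity) hμ'le
    have hUlay : ∫ x, U x ∂μ' ≤ t - s := by
      rw [hlayer]
      have hexpInt : IntegrableOn (fun x : ℝ => Real.exp (-x)) (Set.Ioi (0:ℝ)) := by
        have := exp_neg_integrableOn_Ioi 0 one_pos
        simpa using this
      have hint2 : IntegrableOn (fun t' : ℝ => (t - s) * Real.exp (-t')) (Set.Ioi (0:ℝ)) :=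
        hexpInt.const_mul _
      calc ∫ t' in Set.Ioi (0:ℝ), (μ' {x | t' < U x}).toReal
          ≤ ∫ t' in Set.Ioi (0:ℝ), (t - s) * Real.exp (-t') := by
            apply integral_mono_of_nonneg (ae_of_all _ fun t' => ENNReal.toReal_nonneg) hint2
            exact (ae_restrict_mem measurableSet_Ioi).mono fun t' ht' => hmeas t' ht'
      _ = (t - s) * ∫ t' in Set.Ioi (0:ℝ), Real.exp (-t') := integral_const_mul _ _
      _ = (t - s) * Real.exp (-(0:ℝ)) := by rw [integral_exp_neg_Ioi]
      _ = t - s := by simp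
    -- average of the logarithm
    have havglog : (t - s)⁻¹ * ∫ x in s..t, Real.log (maxFn g x) ≤ Real.log m₀ + 24 := by
      have h1 : ∫ x in s..t, Real.log (maxFn g x)
          = ∫ x in Set.Ioc s t, Real.log (maxFn g x) := intervalIntegral.integral_of_le hst.le
      have h2 : ∫ x in Set.Ioc s t, Real.log (maxFn g x) ≤ ∫ x in Set.Ioc s t, (c₀ + U x) := by
        apply integral_mono_ae hlogInt ((hconstInt c₀).add hUint)
        apply ae_of_all
        intro x
        show Real.log (maxFn g x) ≤ c₀ + U x
        have : Real.log (maxFn g x) - c₀ ≤ U x := le_max_left _ _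
        linarith
      have h3 : ∫ x in Set.Ioc s t, (c₀ + U x) = (t - s) * c₀ + ∫ x, U x ∂μ' := by
        rw [← hμ'def, integral_add (hconstInt c₀) hUint]
        congr 1
        rw [integral_const, hμ'def, measureReal_def, Measure.restrict_apply MeasurableSet.univ, Set.univ_inter,
          Real.volume_Ioc, ENNReal.toReal_ofReal (by linarith), smul_eq_mul]
      have hc₀le : c₀ ≤ Real.log m₀ + 23 := by
        have h2l : 2 * l₀ ≤ 24 * m₀ := by linarith
        have h5 : c₀ ≤ Real.log (24 * m₀) := by
          rw [hc₀def]
          exact Real.log_le_log (by positivity) h2l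
        rw [Real.log_mul (by norm_num) hm₀pos.ne'] at h5
        have h24 : Real.log 24 ≤ 23 := by
          have := Real.log_le_sub_one_of_pos (show (0:ℝ) < 24 by norm_num)
          linarith
        linarith
      have hle : ∫ x in s..t, Real.log (maxFn g x) ≤ (t - s) * (c₀ + 1) := by
        rw [h1]
        calc ∫ x in Set.Ioc s t, Real.log (maxFn g x) ≤ (t - s) * c₀ + ∫ x, U x ∂μ' :=
              h3 ▸ h2
        _ ≤ (t - s) * c₀ + (t - s) := by linarith
        _ = (t - s) * (c₀ + 1) := by ring
      rw [inv_mul_le_iff₀ (by linarith : (0:ℝ) < t - s)]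
      calc ∫ x in s..t, Real.log (maxFn g x) ≤ (t - s) * (c₀ + 1) := hle
      _ ≤ (t - s) * (Real.log m₀ + 24) := by nlinarith
    -- average of f
    have hlogII : IntervalIntegrable (fun x => Real.log (maxFn g x)) volume s t := by
      rw [intervalIntegrable_iff_integrableOn_Ioc_of_le hst.le]
      exact hlogInt
    have hwII : IntervalIntegrable w volume s t := by
      rw [intervalIntegrable_iff_integrableOn_Ioc_of_le hst.le]
      exact hwInt
    have havgf : intAvg f s t ≤ α * (Real.log m₀ + 24) + N := by
      rw [intAvg]
      have hsplit : ∫ x in s..t, f x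
          = α * (∫ x in s..t, Real.log (maxFn g x)) + ∫ x in s..t, w x := by
        rw [hf, intervalIntegral.integral_add (hlogII.const_mul α) hwII,
          intervalIntegral.integral_const_mul]
      rw [hsplit]
      have e1 : (t - s)⁻¹ * (α * (∫ x in s..t, Real.log (maxFn g x)) + ∫ x in s..t, w x)
          = α * ((t - s)⁻¹ * ∫ x in s..t, Real.log (maxFn g x))
            + (t - s)⁻¹ * ∫ x in s..t, w x := by ring
      rw [e1]
      have e2 : α * ((t - s)⁻¹ * ∫ x in s..t, Real.log (maxFn g x))
          ≤ α * (Real.log m₀ + 24) := mul_le_mul_of_nonneg_left havglog hα.le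
      linarith [hwavg]
    linarith [havgf, hinf]
  · -- unbounded far part : `maxFn g` vanishes on `[s,t]`
    have hnb : ∀ x ∈ Set.Icc s t, ¬ BddAbove (MXset g x) := by
      intro x hx hbdd
      exact hBdd ⟨2 * maxFn g x, fun c hc => hfar_key c hc x hx hbdd⟩
    have hfx : ∀ x ∈ Set.Icc s t, f x = w x := by
      intro x hx
      have h0 : maxFn g x = 0 := by
        rw [maxFn_eq]; exact Real.sSup_of_not_bddAbove (hnb x hx)
      simp [hf, h0, Real.log_zero]
    have havgf : intAvg f s t ≤ N := by
      rw [intAvg]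
      have heq : ∫ u in s..t, f u = ∫ u in s..t, w u := by
        apply intervalIntegral.integral_congr
        intro u hu
        rw [Set.uIcc_of_le hst.le] at hu
        exact hfx u hu
      rw [heq]
      exact hwavg
    have hinf : -N ≤ essInfIcc f s t := by
      apply le_essInfIcc hst
      have h1 : ∀ᵐ x ∂(volume.restrict (Set.Icc s t)), |w x| ≤ N := ae_restrict_of_ae hwa
      have h2 : ∀ᵐ x ∂(volume.restrict (Set.Icc s t)), x ∈ Set.Icc s t :=
        ae_restrict_mem measurableSet_Icc
      filter_upwards [h1, h2] with x hx1 hx2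
      rw [hfx x hx2]
      linarith [neg_abs_le (w x)]
    have : 0 < α := hα
    linarith

end BLOaux
/-- there is an absolute constant `C > 0` such that for every `α > 0`,
`b ∈ L∞(ℝ)` and `g ∈ L¹_loc(ℝ)` not a.e. zero with `log(Mg) ∈ L¹_loc(ℝ)`, the function
`f = α·log(Mg) + b` satisfies `‖f‖_BLO ≤ C·(α + ‖b‖_∞)`. -/
theorem bloNorm_of_log_maxFn_add_bounded :
    ∃ C : ℝ, 0 < C ∧
      ∀ α : ℝ, 0 < α → ∀ b g : ℝ → ℝ, MemLinfty b →
        MeasureTheory.LocallyIntegrable g → ¬ (g =ᵐ[volume] 0) →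
        MeasureTheory.LocallyIntegrable (fun x => Real.log (maxFn g x)) →
        MemBLO (fun x => α * Real.log (maxFn g x) + b x) ∧
        bloNorm (fun x => α * Real.log (maxFn g x) + b x) ≤ C * (α + linftyNorm b) := by
  refine ⟨100, by norm_num, ?_⟩
  intro α hα b g hb hg hnz hlog
  have hN0 : 0 ≤ linftyNorm b := BLOaux.linftyNorm_nonneg b
  have hbound : ∀ c ∈ oscSet (fun x => α * Real.log (maxFn g x) + b x),
      c ≤ 24 * α + 2 * linftyNorm b := by
    rintro c ⟨a, b', hab, -, rfl⟩
    exact BLOaux.lowOsc_le hα hb hg hnz hlog hab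
  have hle : 24 * α + 2 * linftyNorm b ≤ 100 * (α + linftyNorm b) := by linarith
  refine ⟨⟨?_, ⟨24 * α + 2 * linftyNorm b, fun c hc => hbound c hc⟩⟩, ?_⟩
  · rw [MeasureTheory.locallyIntegrable_iff]
    intro k hk
    exact ((hlog.integrableOn_isCompact hk).const_mul α).add
      ((BLOaux.linfty_locallyIntegrable hb).integrableOn_isCompact hk)
  · exact Real.sSup_le (fun c hc => le_trans (hbound c hc) hle) (by linarith)

end
end

section
/- For every positive integer r, the weight g_r(x) = (−log x)^r on the interval J = (0, 1/e) belongs to the Muckenhoupt class A1 relative to J, and its A1 constant equals the mean of g_r over J, i.e. A1(g_r) = e·∫_0^{1/e} (−log x)^r dx; in particular A1(g_r) < ∞ for every r. -/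
open MeasureTheory Filter Set

noncomputable section

namespace NegLogPowAux

open Real

noncomputable def P (r : ℕ) (s : ℝ) : ℝ :=
  ∑ k ∈ Finset.range (r + 1), ((r.factorial : ℝ) / (k.factorial : ℝ)) * s ^ k

noncomputable def G (r : ℕ) (x : ℝ) : ℝ := x * P r (-Real.log x)

lemma key (r : ℕ) (s : ℝ) :
    ∑ k ∈ Finset.range (r + 1),
      ((r.factorial : ℝ) / (k.factorial : ℝ)) * (s ^ k - k * s ^ (k - 1)) = s ^ r := by
  induction r with
  | zero => simp
  | succ n ih =>
    rw [Finset.sum_range_succ]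
    have h1 : ∀ k ∈ Finset.range (n + 1),
        (((n + 1).factorial : ℝ) / (k.factorial : ℝ)) * (s ^ k - k * s ^ (k - 1))
          = ((n : ℝ) + 1) * (((n.factorial : ℝ) / (k.factorial : ℝ)) * (s ^ k - k * s ^ (k - 1))) := by
      intro k _
      rw [Nat.factorial_succ]
      push_cast
      ring
    rw [Finset.sum_congr rfl h1, ← Finset.mul_sum, ih, div_self (by positivity),
      Nat.add_sub_cancel]
    push_cast
    ring

lemma P_nonneg (r : ℕ) {s : ℝ} (hs : 0 ≤ s) : 0 ≤ P r s := by
  refine Finset.sum_nonneg fun k _ => ?_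
  positivity

lemma P_mono (r : ℕ) {s t : ℝ} (hs : 0 ≤ s) (hst : s ≤ t) : P r s ≤ P r t := by
  refine Finset.sum_le_sum fun k _ => ?_
  have h1 : s ^ k ≤ t ^ k := pow_le_pow_left₀ hs hst k
  have h0 : (0:ℝ) ≤ (r.factorial : ℝ) / (k.factorial : ℝ) := by positivity
  exact mul_le_mul_of_nonneg_left h1 h0

lemma P_le (r : ℕ) {s : ℝ} (hs : 1 ≤ s) : P r s ≤ P r 1 * s ^ r := by
  unfold P
  rw [Finset.sum_mul]
  refine Finset.sum_le_sum fun k hk => ?_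
  have hk' : k ≤ r := Nat.lt_succ_iff.mp (Finset.mem_range.mp hk)
  have h1 : s ^ k ≤ s ^ r := pow_le_pow_right₀ hs hk'
  have h0 : (0:ℝ) ≤ (r.factorial : ℝ) / (k.factorial : ℝ) := by positivity
  rw [one_pow, mul_one]
  exact mul_le_mul_of_nonneg_left h1 h0

lemma hasDerivAt_term (k : ℕ) {x : ℝ} (hx : 0 < x) :
    HasDerivAt (fun y => y * (-Real.log y) ^ k)
      ((-Real.log x) ^ k - k * (-Real.log x) ^ (k - 1)) x := by
  have hlog : HasDerivAt (fun y => -Real.log y) (-x⁻¹) x := (Real.hasDerivAt_log hx.ne').neg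
  have hpow := hlog.pow k
  have h := (hasDerivAt_id x).mul hpow
  refine h.congr_deriv ?_
  show 1 * (-Real.log x) ^ k + x * (↑k * (-Real.log x) ^ (k - 1) * -x⁻¹) = _
  have hx0 : x * x⁻¹ = 1 := mul_inv_cancel₀ hx.ne'
  linear_combination (-(k:ℝ) * (-Real.log x) ^ (k - 1)) * hx0

lemma hasDerivAt_G (r : ℕ) {x : ℝ} (hx : 0 < x) :
    HasDerivAt (G r) ((-Real.log x) ^ r) x := by
  have h : HasDerivAt
      (fun y => ∑ k ∈ Finset.range (r + 1),
        ((r.factorial : ℝ) / (k.factorial : ℝ)) * (y * (-Real.log y) ^ k))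
      (∑ k ∈ Finset.range (r + 1),
        ((r.factorial : ℝ) / (k.factorial : ℝ)) *
          ((-Real.log x) ^ k - k * (-Real.log x) ^ (k - 1))) x :=
    HasDerivAt.fun_sum fun k _ => (hasDerivAt_term k hx).const_mul _
  rw [key] at h
  have hG : G r = fun y => ∑ k ∈ Finset.range (r + 1),
      ((r.factorial : ℝ) / (k.factorial : ℝ)) * (y * (-Real.log y) ^ k) := by
    funext y
    simp only [G, P, Finset.mul_sum]
    exact Finset.sum_congr rfl fun k _ => by ring
  rw [hG]
  exact h

lemma term_tendsto (k : ℕ) :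
    Tendsto (fun x : ℝ => x * (-Real.log x) ^ k) (nhdsWithin 0 (Set.Ioi 0)) (nhds 0) := by
  have h1 : Tendsto (fun x : ℝ => -Real.log x) (nhdsWithin 0 (Set.Ioi 0)) atTop :=
    tendsto_neg_atBot_atTop.comp Real.tendsto_log_nhdsGT_zero
  have h2 := (tendsto_pow_mul_exp_neg_atTop_nhds_zero k).comp h1
  refine h2.congr' ?_
  filter_upwards [self_mem_nhdsWithin] with x hx
  simp only [Function.comp_apply, neg_neg, Real.exp_log hx]
  ring

lemma G_tendsto_zero (r : ℕ) : Tendsto (G r) (nhdsWithin 0 (Set.Ioi 0)) (nhds 0) := by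
  have h : Tendsto (fun x : ℝ => ∑ k ∈ Finset.range (r + 1),
      ((r.factorial : ℝ) / (k.factorial : ℝ)) * (x * (-Real.log x) ^ k))
      (nhdsWithin 0 (Set.Ioi 0))
      (nhds (∑ k ∈ Finset.range (r + 1), ((r.factorial : ℝ) / (k.factorial : ℝ)) * 0)) :=
    tendsto_finset_sum _ fun k _ => (term_tendsto k).const_mul _
  simp only [mul_zero, Finset.sum_const_zero] at h
  refine h.congr fun x => ?_
  simp only [G, P, Finset.mul_sum]
  exact Finset.sum_congr rfl fun k _ => by ring

lemma cont_on (r : ℕ) {s : Set ℝ} (hs : ∀ x ∈ s, x ≠ (0:ℝ)) :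
    ContinuousOn (fun x => (-Real.log x) ^ r) s :=
  ((Real.continuousOn_log.mono hs).neg).pow r

lemma integral_eq (r : ℕ) {a b : ℝ} (ha : 0 < a) (hab : a ≤ b) :
    ∫ x in a..b, (-Real.log x) ^ r = G r b - G r a := by
  apply intervalIntegral.integral_eq_sub_of_hasDerivAt
  · intro x hx
    rw [Set.uIcc_of_le hab] at hx
    exact hasDerivAt_G r (lt_of_lt_of_le ha hx.1)
  · apply ContinuousOn.intervalIntegrable
    apply cont_on
    intro x hx
    rw [Set.uIcc_of_le hab] at hx
    exact (lt_of_lt_of_le ha hx.1).ne'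

lemma hasDerivAt_H (r : ℕ) (u : ℝ) :
    HasDerivAt (fun u => -(P r u * Real.exp (-u))) (u ^ r * Real.exp (-u)) u := by
  have hP : HasDerivAt (P r)
      (∑ k ∈ Finset.range (r + 1), ((r.factorial : ℝ) / (k.factorial : ℝ)) * (k * u ^ (k - 1))) u :=
    HasDerivAt.fun_sum fun k _ => (hasDerivAt_pow k u).const_mul _
  have hexp : HasDerivAt (fun u : ℝ => Real.exp (-u)) (-Real.exp (-u)) u := by
    simpa using (hasDerivAt_neg u).exp
  have h := (hP.mul hexp).neg
  refine h.congr_deriv ?_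
  have hPD : P r u - (∑ k ∈ Finset.range (r + 1),
      ((r.factorial : ℝ) / (k.factorial : ℝ)) * (k * u ^ (k - 1))) = u ^ r := by
    rw [← key r u, P, ← Finset.sum_sub_distrib]
    exact Finset.sum_congr rfl fun k _ => by ring
  linear_combination (Real.exp (-u)) * hPD

lemma H_tendsto (r : ℕ) :
    Tendsto (fun u => -(P r u * Real.exp (-u))) atTop (nhds 0) := by
  have h : Tendsto (fun u : ℝ => ∑ k ∈ Finset.range (r + 1),
      ((r.factorial : ℝ) / (k.factorial : ℝ)) * (u ^ k * Real.exp (-u))) atTop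
      (nhds (∑ k ∈ Finset.range (r + 1), ((r.factorial : ℝ) / (k.factorial : ℝ)) * 0)) :=
    tendsto_finset_sum _ fun k _ => (tendsto_pow_mul_exp_neg_atTop_nhds_zero k).const_mul _
  simp only [mul_zero, Finset.sum_const_zero] at h
  have h2 : Tendsto (fun u => P r u * Real.exp (-u)) atTop (nhds 0) := by
    refine h.congr fun u => ?_
    simp only [P, Finset.sum_mul]
    exact Finset.sum_congr rfl fun k _ => by ring
  simpa using h2.neg

lemma integrable_gamma (r : ℕ) :
    IntegrableOn (fun u : ℝ => u ^ r * Real.exp (-u)) (Set.Ioi (1:ℝ)) :=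
  integrableOn_Ioi_deriv_of_nonneg ((hasDerivAt_H r 1).continuousAt.continuousWithinAt)
    (fun x _ => hasDerivAt_H r x) (fun x hx => by have h1 : (0:ℝ) < x := lt_trans one_pos hx; positivity) (H_tendsto r)

lemma integral_gamma (r : ℕ) :
    ∫ u in Set.Ioi (1:ℝ), u ^ r * Real.exp (-u) = P r 1 * Real.exp (-1) := by
  have h := integral_Ioi_of_hasDerivAt_of_tendsto
    ((hasDerivAt_H r 1).continuousAt.continuousWithinAt)
    (fun x _ => hasDerivAt_H r x) (integrable_gamma r) (H_tendsto r)
  rw [h]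
  ring

lemma deriv_exp_neg (u : ℝ) :
    HasDerivAt (fun u : ℝ => Real.exp (-u)) (-Real.exp (-u)) u := by
  simpa using (hasDerivAt_neg u).exp

lemma image_exp_neg :
    (fun u : ℝ => Real.exp (-u)) '' Set.Ioi 1 = Set.Ioo 0 (Real.exp (-1)) := by
  ext x
  constructor
  · rintro ⟨u, hu, rfl⟩
    exact ⟨Real.exp_pos _, Real.exp_lt_exp.mpr (by linarith [Set.mem_Ioi.mp hu])⟩
  · rintro ⟨hx0, hx1⟩
    refine ⟨-Real.log x, ?_, by simp [Real.exp_log hx0]⟩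
    have h := Real.log_lt_log hx0 hx1
    rw [Real.log_exp] at h
    exact Set.mem_Ioi.mpr (by linarith)

lemma inj_exp_neg : Set.InjOn (fun u : ℝ => Real.exp (-u)) (Set.Ioi 1) :=
  (Real.exp_injective.comp neg_injective).injOn

lemma integrableOn_J (r : ℕ) :
    IntegrableOn (fun x => (-Real.log x) ^ r) (Set.Ioo (0:ℝ) (Real.exp (-1))) := by
  rw [← image_exp_neg,
    integrableOn_image_iff_integrableOn_abs_deriv_smul measurableSet_Ioi
      (fun x _ => (deriv_exp_neg x).hasDerivWithinAt) inj_exp_neg]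
  refine (integrable_gamma r).congr_fun (fun x _ => ?_) measurableSet_Ioi
  show x ^ r * Real.exp (-x) = |(-Real.exp (-x))| • (-Real.log (Real.exp (-x))) ^ r
  rw [smul_eq_mul, abs_neg, abs_of_pos (Real.exp_pos _), Real.log_exp, neg_neg]
  ring

lemma integral_J (r : ℕ) :
    ∫ x in Set.Ioo (0:ℝ) (Real.exp (-1)), (-Real.log x) ^ r = Real.exp (-1) * P r 1 := by
  rw [← image_exp_neg,
    integral_image_eq_integral_abs_deriv_smul measurableSet_Ioi
      (fun x _ => (deriv_exp_neg x).hasDerivWithinAt) inj_exp_neg]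
  rw [show (fun u : ℝ => |(-Real.exp (-u))| • (-Real.log (Real.exp (-u))) ^ r)
      = fun u : ℝ => u ^ r * Real.exp (-u) from ?_]
  · rw [integral_gamma r]; ring
  · funext u
    rw [smul_eq_mul, abs_neg, abs_of_pos (Real.exp_pos _), Real.log_exp, neg_neg]
    ring

/-- `-log b ≥ 1` when `b ≤ e⁻¹`. -/
lemma one_le_neg_log {b : ℝ} (hb0 : 0 < b) (hb : b ≤ Real.exp (-1)) : 1 ≤ -Real.log b := by
  have h := Real.log_le_log (by positivity) hb
  rw [Real.log_exp] at h
  linarith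

lemma essInf_Icc (r : ℕ) {a b : ℝ} (ha : 0 < a) (hab : a < b) (hb : b ≤ Real.exp (-1)) :
    essInfIcc (fun x => (-Real.log x) ^ r) a b = (-Real.log b) ^ r := by
  set f : ℝ → ℝ := fun x => (-Real.log x) ^ r with hf
  have hb0 : 0 < b := ha.trans hab
  have hsb : 1 ≤ -Real.log b := one_le_neg_log hb0 hb
  have hmono : ∀ x ∈ Set.Icc a b, (-Real.log b) ^ r ≤ f x := by
    intro x hx
    have hx0 : 0 < x := lt_of_lt_of_le ha hx.1
    have hlog : Real.log x ≤ Real.log b := Real.log_le_log hx0 hx.2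
    exact pow_le_pow_left₀ (by linarith) (by linarith) r
  set μ := volume.restrict (Set.Icc a b) with hμ
  have hub : ∀ c ∈ {c : ℝ | μ {x | f x < c} = 0}, c ≤ (-Real.log b) ^ r := by
    intro c hc
    by_contra hlt
    push_neg at hlt
    have hcont : ContinuousAt f b := ((Real.continuousAt_log hb0.ne').neg.pow r)
    have hnb : {x | f x < c} ∈ nhds b := hcont (Iio_mem_nhds hlt)
    obtain ⟨ε, hε, hball⟩ := Metric.mem_nhds_iff.mp hnb
    set m := max a (b - ε) with hm
    have hmb : m < b := max_lt hab (by linarith)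
    have hsub : Set.Ioo m b ⊆ {x | f x < c} := by
      intro x hx
      apply hball
      rw [Real.ball_eq_Ioo]
      exact ⟨lt_of_le_of_lt (le_max_right _ _) hx.1, lt_trans hx.2 (by linarith)⟩
    have hsub2 : Set.Ioo m b ⊆ Set.Icc a b :=
      fun x hx => ⟨le_of_lt (lt_of_le_of_lt (le_max_left _ _) hx.1), hx.2.le⟩
    have h1 : μ (Set.Ioo m b) ≤ μ {x | f x < c} := measure_mono hsub
    rw [hc] at h1
    have h2 : μ (Set.Ioo m b) = ENNReal.ofReal (b - m) := by
      rw [hμ, Measure.restrict_apply measurableSet_Ioo, Set.inter_eq_left.mpr hsub2,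
        Real.volume_Ioo]
    rw [h2] at h1
    simp only [nonpos_iff_eq_zero, ENNReal.ofReal_eq_zero] at h1
    linarith
  have hmem : (-Real.log b) ^ r ∈ {c : ℝ | μ {x | f x < c} = 0} := by
    show μ {x | f x < (-Real.log b) ^ r} = 0
    rw [hμ, Measure.restrict_apply' measurableSet_Icc]
    convert measure_empty
    · rw [Set.eq_empty_iff_forall_notMem]
      rintro x ⟨hx1, hx2⟩
      exact absurd (hmono x hx2) (not_le.mpr hx1)
    · infer_instance
  rw [essInfIcc, essInf_eq_sSup]
  exact le_antisymm (csSup_le ⟨_, hmem⟩ hub) (le_csSup ⟨_, hub⟩ hmem)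

lemma avg_le (r : ℕ) {a b : ℝ} (ha : 0 < a) (hab : a < b) (hb : b ≤ Real.exp (-1)) :
    intAvg (fun x => (-Real.log x) ^ r) a b ≤ P r 1 * (-Real.log b) ^ r := by
  have hb0 : 0 < b := ha.trans hab
  have hsb : 1 ≤ -Real.log b := one_le_neg_log hb0 hb
  have hsab : -Real.log b ≤ -Real.log a := by
    have := Real.log_le_log ha hab.le; linarith
  have hPab : P r (-Real.log b) ≤ P r (-Real.log a) := P_mono r (by linarith) hsab
  have hPb0 : 0 ≤ P r (-Real.log b) := P_nonneg r (by linarith)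
  calc intAvg (fun x => (-Real.log x) ^ r) a b
      = (G r b - G r a) / (b - a) := by
        rw [intAvg, integral_eq r ha hab.le, inv_mul_eq_div]
    _ ≤ G r b / b := by
        rw [div_le_div_iff₀ (by linarith) hb0]
        simp only [G]
        nlinarith [mul_le_mul_of_nonneg_left hPab (mul_nonneg ha.le hb0.le)]
    _ = P r (-Real.log b) := by rw [G, mul_div_cancel_left₀ _ hb0.ne']
    _ ≤ P r 1 * (-Real.log b) ^ r := P_le r hsb

theorem main (r : ℕ) (hr : 0 < r) :
    MemA1On (fun x => (-Real.log x) ^ r) (Set.Ioo (0:ℝ) (Real.exp (-1))) ∧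
    sSup {c : ℝ | ∃ a b : ℝ, 0 < a ∧ a < b ∧ b < Real.exp (-1) ∧
        c = intAvg (fun x => (-Real.log x) ^ r) a b /
            essInfIcc (fun x => (-Real.log x) ^ r) a b}
      = Real.exp 1 * ∫ x in Set.Ioo (0:ℝ) (Real.exp (-1)), (-Real.log x) ^ r := by
  have hc0 : (0:ℝ) < Real.exp (-1) := Real.exp_pos _
  constructor
  · refine ⟨(integrableOn_J r).locallyIntegrableOn, ?_, ⟨P r 1, ?_⟩⟩
    · refine Eventually.of_forall fun x hx => ?_
      have h1 : 1 ≤ -Real.log x := one_le_neg_log hx.1 hx.2.le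
      positivity
    · intro a b hab hsub
      have ha : 0 < a := (hsub (Set.left_mem_Icc.mpr hab.le)).1
      have hb : b < Real.exp (-1) := (hsub (Set.right_mem_Icc.mpr hab.le)).2
      rw [essInf_Icc r ha hab hb.le]
      exact avg_le r ha hab hb.le
  · rw [integral_J r, show Real.exp 1 * (Real.exp (-1) * P r 1) = P r 1 by
      rw [← mul_assoc, ← Real.exp_add]; norm_num]
    -- ratio of each admissible pair is ≤ P r 1
    have hub : ∀ c ∈ {c : ℝ | ∃ a b : ℝ, 0 < a ∧ a < b ∧ b < Real.exp (-1) ∧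
        c = intAvg (fun x => (-Real.log x) ^ r) a b /
            essInfIcc (fun x => (-Real.log x) ^ r) a b}, c ≤ P r 1 := by
      rintro c ⟨a, b, ha, hab, hb, rfl⟩
      rw [essInf_Icc r ha hab hb.le]
      have hpos : (0:ℝ) < (-Real.log b) ^ r := by
        have := one_le_neg_log (ha.trans hab) hb.le; positivity
      rw [div_le_iff₀ hpos]
      exact avg_le r ha hab hb.le
    -- the approximating sequence
    set c₀ := Real.exp (-1) with hc₀
    set a : ℕ → ℝ := fun n => c₀ * ((n:ℝ) + 3)⁻¹ with haDef
    set b : ℕ → ℝ := fun n => c₀ * (1 - ((n:ℝ) + 3)⁻¹) with hbDef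
    have hn3 : ∀ n : ℕ, (0:ℝ) < ((n:ℝ) + 3)⁻¹ := fun n => by positivity
    have hn3' : ∀ n : ℕ, ((n:ℝ) + 3)⁻¹ ≤ 1/3 := by
      intro n
      rw [inv_le_comm₀ (by positivity) (by norm_num)]
      push_cast; linarith [Nat.cast_nonneg (α := ℝ) n]
    have hfacts : ∀ n : ℕ, 0 < a n ∧ a n < b n ∧ b n < c₀ := by
      intro n
      refine ⟨by positivity, ?_, ?_⟩
      · have h1 := hn3 n
        have h2 := hn3' n
        rw [haDef, hbDef]
        have : ((n:ℝ) + 3)⁻¹ < 1 - ((n:ℝ) + 3)⁻¹ := by linarith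
        nlinarith
      · rw [hbDef]
        have h1 := hn3 n
        nlinarith
    set x : ℕ → ℝ := fun n => intAvg (fun x => (-Real.log x) ^ r) (a n) (b n) /
        essInfIcc (fun x => (-Real.log x) ^ r) (a n) (b n) with hx
    have hxmem : ∀ n, x n ∈ {c : ℝ | ∃ a b : ℝ, 0 < a ∧ a < b ∧ b < Real.exp (-1) ∧
        c = intAvg (fun x => (-Real.log x) ^ r) a b /
            essInfIcc (fun x => (-Real.log x) ^ r) a b} := by
      intro n
      obtain ⟨h1, h2, h3⟩ := hfacts n
      exact ⟨a n, b n, h1, h2, h3, rfl⟩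
    -- limits
    have hinv : Tendsto (fun n : ℕ => ((n:ℝ) + 3)⁻¹) atTop (nhds 0) :=
      tendsto_inv_atTop_zero.comp (tendsto_atTop_add_const_right _ 3 tendsto_natCast_atTop_atTop)
    have hta : Tendsto a atTop (nhds 0) := by
      have := hinv.const_mul c₀
      simpa using this
    have hta' : Tendsto a atTop (nhdsWithin 0 (Set.Ioi 0)) :=
      tendsto_nhdsWithin_of_tendsto_nhds_of_eventually_within _ hta
        (Eventually.of_forall fun n => Set.mem_Ioi.mpr (hfacts n).1)
    have htb : Tendsto b atTop (nhds c₀) := by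
      have h := ((tendsto_const_nhds (x := (1:ℝ)) (f := atTop (α := ℕ))).sub hinv).const_mul c₀
      simpa using h
    have htGb : Tendsto (fun n => G r (b n)) atTop (nhds (G r c₀)) :=
      ((hasDerivAt_G r hc0).continuousAt.tendsto).comp htb
    have htGa : Tendsto (fun n => G r (a n)) atTop (nhds 0) :=
      (G_tendsto_zero r).comp hta'
    have htden : Tendsto (fun n => b n - a n) atTop (nhds c₀) := by
      have := htb.sub hta
      simpa using this
    have htlog : Tendsto (fun n => (-Real.log (b n)) ^ r) atTop (nhds 1) := by
      have hcont : ContinuousAt (fun y : ℝ => (-Real.log y) ^ r) c₀ :=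
        (Real.continuousAt_log hc0.ne').neg.pow r
      have h := hcont.tendsto.comp htb
      have : (-Real.log c₀) ^ r = 1 := by rw [hc₀, Real.log_exp]; norm_num
      rwa [this] at h
    have htavg : Tendsto (fun n => intAvg (fun x => (-Real.log x) ^ r) (a n) (b n)) atTop
        (nhds (G r c₀ / c₀)) := by
      have h := (htGb.sub htGa).div htden hc0.ne'
      simp only [sub_zero] at h
      refine h.congr fun n => ?_
      obtain ⟨h1, h2, _⟩ := hfacts n
      rw [Pi.div_apply, intAvg, integral_eq r h1 h2.le, inv_mul_eq_div]
    have htx : Tendsto x atTop (nhds (P r 1)) := by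
      have h := htavg.div htlog one_ne_zero
      have hval : G r c₀ / c₀ / 1 = P r 1 := by
        rw [G, mul_div_cancel_left₀ _ hc0.ne', hc₀, Real.log_exp]
        norm_num
      rw [hval] at h
      refine h.congr fun n => ?_
      simp only [Pi.div_apply, hx]
      rw [essInf_Icc r (hfacts n).1 (hfacts n).2.1 (hfacts n).2.2.le]
    refine IsLUB.csSup_eq ⟨hub, fun u hu => ?_⟩ ⟨x 0, hxmem 0⟩
    exact le_of_tendsto htx (Eventually.of_forall fun n => hu (hxmem n))

end NegLogPowAux

/-- for every positive integer `r`, the weight `g_r(x) = (−log x)^r` on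
`J = (0, 1/e)` belongs to `A₁` relative to `J`, with `A₁` constant equal to the mean of
`g_r` over `J`, namely `e·∫_0^(1/e) (−log x)^r dx`. -/
theorem neg_log_pow_memA1 (r : ℕ) (hr : 0 < r) :
    MemA1On (fun x => (-Real.log x) ^ r) (Set.Ioo (0:ℝ) (Real.exp (-1))) ∧
    sSup {c : ℝ | ∃ a b : ℝ, 0 < a ∧ a < b ∧ b < Real.exp (-1) ∧
        c = intAvg (fun x => (-Real.log x) ^ r) a b /
            essInfIcc (fun x => (-Real.log x) ^ r) a b}
      = Real.exp 1 * ∫ x in Set.Ioo (0:ℝ) (Real.exp (-1)), (-Real.log x) ^ r :=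
  NegLogPowAux.main r hr

end
end

section
/- The function f(x) = log(−log x) on J = (0, 1/e) is not essentially bounded on J, yet it lies in the closure of L∞(J) in the BLO seminorm: inf{‖f − h‖_{BLO(J)} : h ∈ L∞(J)} = 0. -/
open MeasureTheory Filter Set

noncomputable section

namespace LogLogAux

noncomputable def ff : ℝ → ℝ := fun x => Real.log (-Real.log x)

lemma ff_meas : Measurable ff :=
  Real.measurable_log.comp Real.measurable_log.neg

lemma ff_contOn {a b : ℝ} (ha : 0 < a) (hb : b < 1) : ContinuousOn ff (Icc a b) := by
  intro x hx
  have hx0 : 0 < x := lt_of_lt_of_le ha hx.1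
  have hx1 : x < 1 := lt_of_le_of_lt hx.2 hb
  have h1 : -Real.log x ≠ 0 := by
    have : Real.log x < 0 := Real.log_neg hx0 hx1
    intro h; rw [neg_eq_zero] at h; linarith
  have : ContinuousAt (Real.log ∘ fun y => -Real.log y) x :=
    ContinuousAt.comp (Real.continuousAt_log h1) ((Real.continuousAt_log hx0.ne').neg)
  exact this.continuousWithinAt

lemma ff_anti {x y : ℝ} (hx : 0 < x) (hxy : x ≤ y) (hy : y < 1) : ff y ≤ ff x := by
  have hy0 : 0 < y := lt_of_lt_of_le hx hxy
  have hly : Real.log y < 0 := Real.log_neg hy0 hy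
  have h1 : Real.log x ≤ Real.log y := Real.log_le_log hx hxy
  exact Real.log_le_log (by linarith) (by linarith)

lemma neBot_ae_restrict {a b : ℝ} (hab : a < b) : (ae ((volume : Measure ℝ).restrict (Icc a b))).NeBot := by
  rw [ae_neBot, Ne, Measure.restrict_eq_zero, Real.volume_Icc, ENNReal.ofReal_eq_zero]
  push_neg; linarith

lemma le_essInfIcc {g : ℝ → ℝ} {a b m M : ℝ} (hab : a < b)
    (hm : ∀ᵐ x ∂(volume.restrict (Icc a b)), m ≤ g x)
    (hM : ∀ᵐ x ∂(volume.restrict (Icc a b)), g x ≤ M) :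
    m ≤ essInfIcc g a b := by
  haveI := neBot_ae_restrict hab
  unfold essInfIcc essInf
  exact Filter.le_liminf_of_le
    (Filter.IsBoundedUnder.isCoboundedUnder_ge ⟨M, by simpa [Filter.eventually_map] using hM⟩) hm

lemma essInfIcc_le_intAvg {g : ℝ → ℝ} {a b m : ℝ} (hab : a < b)
    (hint : IntegrableOn g (Icc a b))
    (hm : ∀ᵐ x ∂(volume.restrict (Icc a b)), m ≤ g x) :
    essInfIcc g a b ≤ intAvg g a b := by
  have hba : (0:ℝ) < b - a := by linarith
  unfold essInfIcc essInf
  refine Filter.liminf_le_of_le ⟨m, by simpa [Filter.eventually_map] using hm⟩ ?_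
  intro c hc
  have h1 : ∫ _x in Icc a b, c ∂volume ≤ ∫ x in Icc a b, g x ∂volume :=
    integral_mono_ae (integrable_const c) hint hc
  rw [setIntegral_const, Real.volume_real_Icc_of_le hab.le, smul_eq_mul] at h1
  unfold intAvg
  rw [intervalIntegral.integral_of_le hab.le, ← integral_Icc_eq_integral_Ioc,
    inv_mul_eq_div, le_div_iff₀ hba]
  linarith

lemma intAvg_ff_le {a b s : ℝ} (ha : 0 < a) (hab : a < b) (hs : 1 ≤ s)
    (hb : b ≤ Real.exp (-s)) : intAvg ff a b ≤ ff b + 1 / s := by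
  have hs0 : (0:ℝ) < s := lt_of_lt_of_le one_pos hs
  have hb0 : 0 < b := lt_trans ha hab
  have hb1 : b < 1 := lt_of_le_of_lt hb (by rw [Real.exp_lt_one_iff]; linarith)
  have hlogb : s ≤ -Real.log b := by
    have := (Real.log_le_iff_le_exp hb0).2 hb; linarith
  have hvb : 0 < -Real.log b := lt_of_lt_of_le hs0 hlogb
  have hba : (0:ℝ) < b - a := by linarith
  -- pointwise bound
  have hpt : ∀ x ∈ Icc a b, ff x ≤ (ff b + Real.log b / s) + (-(1/s)) * Real.log x := by
    intro x hx
    have hx0 : 0 < x := lt_of_lt_of_le ha hx.1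
    have hlx : Real.log x ≤ Real.log b := Real.log_le_log hx0 hx.2
    have hvx : 0 < -Real.log x := by linarith
    have h1 : ff x - ff b ≤ (-Real.log x) / (-Real.log b) - 1 := by
      have h2 := Real.log_le_sub_one_of_pos (div_pos hvx hvb)
      rw [Real.log_div hvx.ne' hvb.ne'] at h2
      simpa [ff] using h2
    have h2 : (-Real.log x) / (-Real.log b) - 1 = (Real.log b - Real.log x) / (-Real.log b) := by
      rw [div_sub_one (ne_of_gt hvb)]; congr 1; ring
    have h3 : (Real.log b - Real.log x) / (-Real.log b) ≤ (Real.log b - Real.log x) / s :=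
      div_le_div_of_nonneg_left (by linarith) hs0 hlogb
    have h4 : (Real.log b - Real.log x) / s = Real.log b / s + (-(1/s)) * Real.log x := by ring
    linarith
  -- integrability
  have hint1 : IntervalIntegrable ff volume a b :=
    (ff_contOn ha hb1).intervalIntegrable_of_Icc hab.le
  have hlogint : IntervalIntegrable Real.log volume a b := by
    refine ContinuousOn.intervalIntegrable_of_Icc hab.le ?_
    intro x hx
    exact (Real.continuousAt_log (ne_of_gt (lt_of_lt_of_le ha hx.1))).continuousWithinAt
  have hint2 : IntervalIntegrable (fun x => (ff b + Real.log b / s) + (-(1/s)) * Real.log x)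
      volume a b :=
    intervalIntegrable_const.add (hlogint.const_mul _)
  have hmono := intervalIntegral.integral_mono_on hab.le hint1 hint2 hpt
  have hI : ∫ x in a..b, ((ff b + Real.log b / s) + (-(1/s)) * Real.log x)
      = (b - a) * (ff b + Real.log b / s)
        + (-(1/s)) * (b * Real.log b - a * Real.log a - b + a) := by
    rw [intervalIntegral.integral_add intervalIntegrable_const (hlogint.const_mul _),
      intervalIntegral.integral_const, intervalIntegral.integral_const_mul,
      integral_log, smul_eq_mul]
  have hla : Real.log a ≤ Real.log b := Real.log_le_log ha hab.le
  have hkey : (b - a) * (ff b + Real.log b / s)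
        + (-(1/s)) * (b * Real.log b - a * Real.log a - b + a)
      = (b - a) * (ff b + 1/s) + (1/s) * (a * (Real.log a - Real.log b)) := by
    ring
  have hneg : (1/s) * (a * (Real.log a - Real.log b)) ≤ 0 :=
    mul_nonpos_of_nonneg_of_nonpos (by positivity)
      (mul_nonpos_of_nonneg_of_nonpos ha.le (by linarith))
  have h5 : ∫ x in a..b, ff x ≤ (b - a) * (ff b + 1/s) := by
    rw [hI, hkey] at hmono; linarith
  unfold intAvg
  rw [inv_mul_eq_div, div_le_iff₀ hba]
  linarith [h5]

lemma lowOsc_gN_le (N : ℕ) {a b : ℝ} (hab : a < b)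
    (hsub : Icc a b ⊆ Ioo 0 (Real.exp (-1))) :
    lowOsc (fun x => ff x - min (ff x) (N:ℝ)) a b ≤ Real.exp (-(N:ℝ)) := by
  set g : ℝ → ℝ := fun x => ff x - min (ff x) (N:ℝ) with hg
  set c : ℝ := Real.exp (-Real.exp (N:ℝ)) with hcdef
  have hN1 : (1:ℝ) ≤ Real.exp (N:ℝ) := Real.one_le_exp (Nat.cast_nonneg N)
  have hc0 : 0 < c := Real.exp_pos _
  have hc1 : c < 1 := by rw [hcdef, Real.exp_lt_one_iff]; linarith
  have ha0 : 0 < a := (hsub ⟨le_refl a, hab.le⟩).1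
  have hb1 : b < 1 := lt_trans (hsub ⟨hab.le, le_refl b⟩).2
    (by rw [Real.exp_lt_one_iff]; norm_num)
  have hba : (0:ℝ) < b - a := by linarith
  have hexpN : Real.exp (-(N:ℝ)) = 1 / Real.exp (N:ℝ) := by
    rw [Real.exp_neg]; ring
  have ffc : ff c = (N:ℝ) := by
    rw [hcdef]; unfold ff; rw [Real.log_exp, neg_neg, Real.log_exp]
  have hgval_le : ∀ x, 0 < x → x ≤ c → g x = ff x - (N:ℝ) := by
    intro x hx hxc
    have h1 : (N:ℝ) ≤ ff x := by rw [← ffc]; exact ff_anti hx hxc hc1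
    simp [hg, min_eq_right h1]
  have hgval_ge : ∀ x, c ≤ x → x < 1 → g x = 0 := by
    intro x hxc hx1
    have h1 : ff x ≤ (N:ℝ) := by rw [← ffc]; exact ff_anti hc0 hxc hx1
    simp [hg, min_eq_left h1]
  have hg_nonneg : ∀ x, 0 ≤ g x := fun x => sub_nonneg.2 (min_le_left _ _)
  have hgcont : ContinuousOn g (Icc a b) :=
    (ff_contOn ha0 hb1).sub
      ((continuous_id.min continuous_const).comp_continuousOn (ff_contOn ha0 hb1))
  obtain ⟨C, hC⟩ := isCompact_Icc.exists_bound_of_continuousOn hgcont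
  have hgle : ∀ᵐ x ∂(volume.restrict (Icc a b)), g x ≤ C := by
    refine (ae_restrict_iff' measurableSet_Icc).2 (Filter.Eventually.of_forall ?_)
    intro x hx
    exact le_trans (le_abs_self _) (le_of_eq_of_le (Real.norm_eq_abs _).symm (hC x hx))
  have hffint : IntervalIntegrable ff volume a b :=
    (ff_contOn ha0 hb1).intervalIntegrable_of_Icc hab.le
  rcases le_or_gt b c with hbc | hcb
  · -- case b ≤ c : here g = ff - N on [a,b]
    have hm : ∀ᵐ x ∂(volume.restrict (Icc a b)), ff b - (N:ℝ) ≤ g x := by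
      refine (ae_restrict_iff' measurableSet_Icc).2 (Filter.Eventually.of_forall ?_)
      intro x hx
      rw [hgval_le x (lt_of_lt_of_le ha0 hx.1) (le_trans hx.2 hbc)]
      have := ff_anti (lt_of_lt_of_le ha0 hx.1) hx.2 hb1
      linarith
    have hEI := le_essInfIcc hab hm hgle
    have havg : intAvg g a b = intAvg ff a b - (N:ℝ) := by
      unfold intAvg
      have hcongr : ∫ x in a..b, g x = ∫ x in a..b, (ff x - (N:ℝ)) := by
        refine intervalIntegral.integral_congr ?_
        intro x hx
        rw [uIcc_of_le hab.le] at hx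
        exact hgval_le x (lt_of_lt_of_le ha0 hx.1) (le_trans hx.2 hbc)
      rw [hcongr, intervalIntegral.integral_sub hffint intervalIntegrable_const,
        intervalIntegral.integral_const, smul_eq_mul, mul_sub]
      have h2 : (b - a)⁻¹ * ((b - a) * (N:ℝ)) = (N:ℝ) := by
        field_simp
      rw [h2]
    have hKEY : intAvg ff a b ≤ ff b + 1 / Real.exp (N:ℝ) :=
      intAvg_ff_le ha0 hab hN1 (by rw [← hcdef]; exact hbc)
    unfold lowOsc
    rw [havg, hexpN]
    linarith
  rcases le_or_gt c a with hca | hac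
  · -- case c ≤ a : here g = 0 on [a,b]
    have hm : ∀ᵐ x ∂(volume.restrict (Icc a b)), (0:ℝ) ≤ g x :=
      Filter.Eventually.of_forall fun x => hg_nonneg x
    have hEI := le_essInfIcc hab hm hgle
    have havg : intAvg g a b = 0 := by
      unfold intAvg
      have hcongr : ∫ x in a..b, g x = ∫ _x in a..b, (0:ℝ) := by
        refine intervalIntegral.integral_congr ?_
        intro x hx
        rw [uIcc_of_le hab.le] at hx
        rw [hgval_ge x (le_trans hca hx.1) (lt_of_le_of_lt hx.2 hb1)]
      rw [hcongr, intervalIntegral.integral_zero, mul_zero]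
    unfold lowOsc
    rw [havg]
    have := Real.exp_pos (-(N:ℝ))
    linarith
  · -- case a < c < b
    have hm : ∀ᵐ x ∂(volume.restrict (Icc a b)), (0:ℝ) ≤ g x :=
      Filter.Eventually.of_forall fun x => hg_nonneg x
    have hEI := le_essInfIcc hab hm hgle
    have hca0 : (0:ℝ) < c - a := by linarith
    have hint_ac : IntervalIntegrable g volume a c :=
      (hgcont.mono (Icc_subset_Icc le_rfl hcb.le)).intervalIntegrable_of_Icc hac.le
    have hint_cb : IntervalIntegrable g volume c b :=
      (hgcont.mono (Icc_subset_Icc hac.le le_rfl)).intervalIntegrable_of_Icc hcb.le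
    have hsplit := intervalIntegral.integral_add_adjacent_intervals hint_ac hint_cb
    have hzero : ∫ x in c..b, g x = 0 := by
      have hcongr : ∫ x in c..b, g x = ∫ _x in c..b, (0:ℝ) := by
        refine intervalIntegral.integral_congr ?_
        intro x hx
        rw [uIcc_of_le hcb.le] at hx
        rw [hgval_ge x hx.1 (lt_of_le_of_lt hx.2 hb1)]
      rw [hcongr, intervalIntegral.integral_zero]
    have hffint_ac : IntervalIntegrable ff volume a c :=
      (ff_contOn ha0 hc1).intervalIntegrable_of_Icc hac.le
    have hac_int : ∫ x in a..c, g x = (∫ x in a..c, ff x) - (c - a) * (N:ℝ) := by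
      have hcongr : ∫ x in a..c, g x = ∫ x in a..c, (ff x - (N:ℝ)) := by
        refine intervalIntegral.integral_congr ?_
        intro x hx
        rw [uIcc_of_le hac.le] at hx
        exact hgval_le x (lt_of_lt_of_le ha0 hx.1) hx.2
      rw [hcongr, intervalIntegral.integral_sub hffint_ac intervalIntegrable_const,
        intervalIntegral.integral_const, smul_eq_mul]
    have hKEY : intAvg ff a c ≤ ff c + 1 / Real.exp (N:ℝ) :=
      intAvg_ff_le ha0 hac hN1 (by rw [← hcdef])
    have hKEY2 : ∫ x in a..c, ff x ≤ (c - a) * ((N:ℝ) + 1 / Real.exp (N:ℝ)) := by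
      unfold intAvg at hKEY
      rw [ffc] at hKEY
      rw [inv_mul_eq_div, div_le_iff₀ hca0] at hKEY
      linarith [hKEY]
    have hexp_pos : (0:ℝ) < Real.exp (-(N:ℝ)) := Real.exp_pos _
    have htot : ∫ x in a..b, g x ≤ (b - a) * Real.exp (-(N:ℝ)) := by
      rw [← hsplit, hzero, add_zero, hac_int]
      have h8 : (∫ x in a..c, ff x) - (c - a) * (N:ℝ) ≤ (c - a) * Real.exp (-(N:ℝ)) := by
        rw [hexpN]
        nlinarith [hKEY2]
      nlinarith [h8, hexp_pos]
    have havg : intAvg g a b ≤ Real.exp (-(N:ℝ)) := by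
      unfold intAvg
      rw [inv_mul_eq_div, div_le_iff₀ hba]
      linarith [htot]
    unfold lowOsc
    linarith

lemma bloNormOn_gN_le (N : ℕ) :
    bloNormOn (fun x => ff x - min (ff x) (N:ℝ)) (Ioo 0 (Real.exp (-1)))
      ≤ Real.exp (-(N:ℝ)) := by
  refine Real.sSup_le ?_ (Real.exp_pos _).le
  rintro x ⟨a, b, hab, hsub, rfl⟩
  exact lowOsc_gN_le N hab hsub

lemma zero_le_bloNormOn {h : ℝ → ℝ} (hh : MemLinftyOn h (Ioo 0 (Real.exp (-1)))) :
    0 ≤ bloNormOn (fun x => ff x - h x) (Ioo 0 (Real.exp (-1))) := by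
  obtain ⟨hmeas, M, hM⟩ := hh
  have he : 0 < Real.exp (-1) := Real.exp_pos _
  set a : ℝ := Real.exp (-1) / 4 with hadef
  set b : ℝ := Real.exp (-1) / 2 with hbdef
  have hab : a < b := by rw [hadef, hbdef]; linarith
  have ha0 : 0 < a := by rw [hadef]; linarith
  have hsub : Icc a b ⊆ Ioo 0 (Real.exp (-1)) := by
    intro x hx
    refine ⟨lt_of_lt_of_le ha0 hx.1, lt_of_le_of_lt hx.2 ?_⟩
    rw [hbdef]; linarith
  have hb1 : b < 1 := by
    have : Real.exp (-1) < 1 := by rw [Real.exp_lt_one_iff]; norm_num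
    rw [hbdef]; linarith
  obtain ⟨Cf, hCf⟩ := isCompact_Icc.exists_bound_of_continuousOn (ff_contOn ha0 hb1)
  have hMres : ∀ᵐ x ∂(volume.restrict (Icc a b)), |h x| ≤ M := by
    filter_upwards [ae_restrict_of_ae hM, ae_restrict_mem measurableSet_Icc] with x h1 h2
    exact h1 (hsub h2)
  have hfres : ∀ᵐ x ∂(volume.restrict (Icc a b)), |ff x| ≤ Cf := by
    refine (ae_restrict_iff' measurableSet_Icc).2 (Filter.Eventually.of_forall ?_)
    intro x hx
    exact le_of_eq_of_le (Real.norm_eq_abs _).symm (hCf x hx)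
  haveI : IsFiniteMeasure (volume.restrict (Icc a b)) :=
    ⟨by rw [Measure.restrict_apply_univ]; exact measure_Icc_lt_top⟩
  have haesm : AEStronglyMeasurable (fun x => ff x - h x) (volume.restrict (Icc a b)) :=
    ff_meas.aestronglyMeasurable.sub (hmeas.mono_measure (Measure.restrict_mono hsub le_rfl))
  have hint : IntegrableOn (fun x => ff x - h x) (Icc a b) := by
    refine Integrable.mono' (integrable_const (Cf + M)) haesm ?_
    filter_upwards [hMres, hfres] with x h1 h2
    calc ‖ff x - h x‖ ≤ ‖ff x‖ + ‖h x‖ := norm_sub_le _ _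
      _ ≤ Cf + M := by rw [Real.norm_eq_abs, Real.norm_eq_abs]; linarith
  have hm : ∀ᵐ x ∂(volume.restrict (Icc a b)), -(Cf + M) ≤ ff x - h x := by
    filter_upwards [hMres, hfres] with x h1 h2
    have e1 := abs_le.1 h1
    have e2 := abs_le.1 h2
    linarith [e1.1, e1.2, e2.1, e2.2]
  have hosc : 0 ≤ lowOsc (fun x => ff x - h x) a b :=
    sub_nonneg.2 (essInfIcc_le_intAvg hab hint hm)
  have hmem : lowOsc (fun x => ff x - h x) a b
      ∈ oscSetOn (fun x => ff x - h x) (Ioo 0 (Real.exp (-1))) :=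
    ⟨a, b, hab, hsub, rfl⟩
  unfold bloNormOn
  by_cases hbdd : BddAbove (oscSetOn (fun x => ff x - h x) (Ioo 0 (Real.exp (-1))))
  · exact le_trans hosc (le_csSup hbdd hmem)
  · rw [Real.sSup_of_not_bddAbove hbdd]

lemma not_essBdd : ¬ ∃ M : ℝ, ∀ᵐ x ∂(volume : Measure ℝ),
    x ∈ Set.Ioo (0:ℝ) (Real.exp (-1)) → |Real.log (-Real.log x)| ≤ M := by
  rintro ⟨M, hM⟩
  set M' := max M 0 with hM'
  set t := Real.exp (M' + 1) with ht
  have hM'0 : 0 ≤ M' := le_max_right _ _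
  have ht1 : 1 < t := by
    have h9 : Real.exp (0:ℝ) < Real.exp (M' + 1) := Real.exp_lt_exp.2 (by linarith)
    rwa [Real.exp_zero] at h9
  set r := Real.exp (-t) with hr
  have hr0 : 0 < r := Real.exp_pos _
  have hre : r < Real.exp (-1) := Real.exp_lt_exp.2 (by linarith)
  have key : ∀ x ∈ Ioo (0:ℝ) r, M < |Real.log (-Real.log x)| := by
    intro x hx
    have hlx : Real.log x < -t := by
      have h1 := Real.log_lt_log hx.1 hx.2
      rwa [hr, Real.log_exp] at h1
    have h3 : Real.log t < Real.log (-Real.log x) :=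
      Real.log_lt_log (by linarith) (by linarith)
    rw [ht, Real.log_exp] at h3
    have h4 := le_abs_self (Real.log (-Real.log x))
    have h5 : M ≤ M' := le_max_left _ _
    linarith
  have hae : ∀ᵐ x ∂(volume : Measure ℝ), x ∉ Ioo (0:ℝ) r := by
    filter_upwards [hM] with x hx hxA
    exact absurd (hx ⟨hxA.1, lt_trans hxA.2 hre⟩) (not_le.2 (key x hxA))
  have h0 : (volume : Measure ℝ) (Ioo (0:ℝ) r) = 0 := by
    have h1 := ae_iff.1 hae
    exact measure_mono_null (fun x hx => not_not_intro hx) h1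
  rw [Real.volume_Ioo] at h0
  rw [ENNReal.ofReal_eq_zero] at h0
  linarith

end LogLogAux

/-- `f(x) = log(−log x)` on `J = (0, 1/e)` is not essentially bounded,
yet it lies in the closure of `L∞(J)` in the BLO(J) seminorm. -/
theorem log_neg_log_unbounded_in_closure :
    (¬ ∃ M : ℝ, ∀ᵐ x ∂volume, x ∈ Set.Ioo (0:ℝ) (Real.exp (-1)) →
        |Real.log (-Real.log x)| ≤ M) ∧
    sInf {c : ℝ | ∃ h : ℝ → ℝ, MemLinftyOn h (Set.Ioo (0:ℝ) (Real.exp (-1))) ∧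
        c = bloNormOn (fun x => Real.log (-Real.log x) - h x)
              (Set.Ioo (0:ℝ) (Real.exp (-1)))} = 0 := by
  constructor
  · exact LogLogAux.not_essBdd
  · set S := {c : ℝ | ∃ h : ℝ → ℝ, MemLinftyOn h (Set.Ioo (0:ℝ) (Real.exp (-1))) ∧
        c = bloNormOn (fun x => Real.log (-Real.log x) - h x)
              (Set.Ioo (0:ℝ) (Real.exp (-1)))} with hS
    have hlb : ∀ c ∈ S, (0:ℝ) ≤ c := by
      rintro c ⟨h, hh, rfl⟩
      exact LogLogAux.zero_le_bloNormOn hh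
    have hmemN : ∀ N : ℕ, ∃ c ∈ S, c ≤ Real.exp (-(N:ℝ)) := by
      intro N
      refine ⟨bloNormOn
          (fun x => Real.log (-Real.log x) - min (Real.log (-Real.log x)) (N:ℝ))
          (Set.Ioo (0:ℝ) (Real.exp (-1))),
        ⟨fun x => min (Real.log (-Real.log x)) (N:ℝ), ⟨?_, ?_⟩, rfl⟩, ?_⟩
      · exact ((LogLogAux.ff_meas.min measurable_const).aestronglyMeasurable).restrict
      · refine ⟨(N:ℝ), Filter.Eventually.of_forall fun x hx => ?_⟩
        have h1 : 0 ≤ Real.log (-Real.log x) := by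
          have h2 : Real.log x ≤ -1 := by
            have h3 := Real.log_le_log hx.1 hx.2.le
            rwa [Real.log_exp] at h3
          exact Real.log_nonneg (by linarith)
        rw [abs_le]
        constructor
        · have h4 : (0:ℝ) ≤ min (Real.log (-Real.log x)) (N:ℝ) :=
            le_min h1 (Nat.cast_nonneg N)
          have h5 : (0:ℝ) ≤ (N:ℝ) := Nat.cast_nonneg N
          linarith
        · exact min_le_right _ _
      · exact LogLogAux.bloNormOn_gN_le N
    have hne : S.Nonempty := by
      obtain ⟨c, hc, -⟩ := hmemN 0
      exact ⟨c, hc⟩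
    refine le_antisymm ?_ (le_csInf hne hlb)
    have hinf_le : ∀ N : ℕ, sInf S ≤ Real.exp (-(N:ℝ)) := by
      intro N
      obtain ⟨c, hc, hcle⟩ := hmemN N
      exact le_trans (csInf_le ⟨0, hlb⟩ hc) hcle
    have htend : Tendsto (fun N : ℕ => Real.exp (-(N:ℝ))) atTop (nhds 0) :=
      Real.tendsto_exp_neg_atTop_nhds_zero.comp tendsto_natCast_atTop_atTop
    exact ge_of_tendsto' htend hinf_le

end
end

section
/- For every positive integer r, the function t ↦ (e^t/t^r)·∫_0^{e^{−t}} (−log x)^r dx is non-increasing on [1, ∞). -/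
open MeasureTheory Filter Set

noncomputable section

open Topology in
private lemma telescope (r : ℕ) (u : ℝ) :
    ∑ k ∈ Finset.range (r+1), (u^k / k.factorial - k * u^(k-1) / k.factorial)
      = u^r / r.factorial := by
  rw [Finset.sum_range_succ']
  have h : ∀ i : ℕ, u^(i+1) / (i+1).factorial - (↑(i+1)) * u^(i+1-1) / (i+1).factorial
      = u^(i+1) / (i+1).factorial - u^i / i.factorial := by
    intro i
    congr 1
    rw [Nat.factorial_succ]
    push_cast
    field_simp
  rw [Finset.sum_congr rfl (fun i _ => h i), Finset.sum_range_sub (fun k => u^k / k.factorial)]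
  simp

open Topology in
private lemma hasDerivAt_G (r : ℕ) (u : ℝ) :
    HasDerivAt (fun u : ℝ => -Real.exp (-u) * ∑ k ∈ Finset.range (r+1), u^k / k.factorial)
      (Real.exp (-u) * u^r / r.factorial) u := by
  have h1 : HasDerivAt (fun u : ℝ => -Real.exp (-u)) (Real.exp (-u)) u := by
    have := ((Real.hasDerivAt_exp (-u)).comp u (hasDerivAt_neg u)).fun_neg
    simpa [Function.comp_def] using this
  have h2 : HasDerivAt (fun u : ℝ => ∑ k ∈ Finset.range (r+1), u^k / k.factorial)
      (∑ k ∈ Finset.range (r+1), (k : ℝ) * u^(k-1) / k.factorial) u :=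
    HasDerivAt.fun_sum fun k _ => (hasDerivAt_pow k u).div_const _
  have := h1.fun_mul h2
  refine this.congr_deriv ?_
  have ht := telescope r u
  rw [Finset.sum_sub_distrib] at ht
  linear_combination Real.exp (-u) * ht

open Topology in
private lemma integral_Ioi_eq (r : ℕ) (t : ℝ) (ht : 0 < t) :
    ∫ u in Set.Ioi t, Real.exp (-u) * u^r
      = (r.factorial : ℝ) * Real.exp (-t) * ∑ k ∈ Finset.range (r+1), t^k / k.factorial := by
  have hfact : (0:ℝ) < r.factorial := by positivity
  have hlim : Tendsto (fun u : ℝ => -Real.exp (-u) * ∑ k ∈ Finset.range (r+1), u^k / k.factorial)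
      atTop (𝓝 0) := by
    have h0 : Tendsto (fun u : ℝ => ∑ k ∈ Finset.range (r+1), u^k * Real.exp (-u) / k.factorial)
        atTop (𝓝 (∑ k ∈ Finset.range (r+1), (0:ℝ))) := by
      apply tendsto_finset_sum
      intro k _
      simpa using (Real.tendsto_pow_mul_exp_neg_atTop_nhds_zero k).div_const (k.factorial : ℝ)
    simp only [Finset.sum_const_zero] at h0
    have := h0.neg
    rw [neg_zero] at this
    apply this.congr
    intro u
    rw [neg_mul, neg_inj, Finset.mul_sum]
    exact Finset.sum_congr rfl fun k _ => by ring
  have key := integral_Ioi_of_hasDerivAt_of_nonneg' (g' := fun u => Real.exp (-u) * u^r / r.factorial)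
    (fun u _ => hasDerivAt_G r u)
    (fun u hu => by
      have : (0:ℝ) < u := ht.trans hu
      positivity) hlim
  have : ∫ u in Set.Ioi t, Real.exp (-u) * u ^ r / r.factorial
      = (∫ u in Set.Ioi t, Real.exp (-u) * u ^ r) / r.factorial := by
    exact integral_div _ _
  rw [this] at key
  rw [div_eq_iff hfact.ne'] at key
  rw [key]
  ring

open Topology in
private lemma integral_Ioo_eq (r : ℕ) (t : ℝ) (ht : 0 < t) :
    (∫ x in Set.Ioo (0:ℝ) (Real.exp (-t)), (-Real.log x) ^ r)
      = (r.factorial : ℝ) * Real.exp (-t) * ∑ k ∈ Finset.range (r+1), t^k / k.factorial := by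
  have himg : (fun u : ℝ => Real.exp (-u)) '' Set.Ioi t = Set.Ioo 0 (Real.exp (-t)) := by
    ext x
    constructor
    · rintro ⟨u, hu, rfl⟩
      exact ⟨Real.exp_pos _, Real.exp_lt_exp.2 (by simpa using hu)⟩
    · rintro ⟨hx0, hxe⟩
      refine ⟨-Real.log x, ?_, by simp [Real.exp_log hx0]⟩
      have := (Real.log_lt_iff_lt_exp hx0).2 hxe
      simpa [Set.mem_Ioi] using by linarith [this]
  have hd : ∀ u ∈ Set.Ioi t, HasDerivWithinAt (fun u : ℝ => Real.exp (-u)) (-Real.exp (-u)) (Set.Ioi t) u := by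
    intro u _
    have := (Real.hasDerivAt_exp (-u)).comp u (hasDerivAt_neg u)
    exact (by simpa [Function.comp_def] using this : HasDerivAt (fun u : ℝ => Real.exp (-u)) (-Real.exp (-u)) u).hasDerivWithinAt
  have hinj : Set.InjOn (fun u : ℝ => Real.exp (-u)) (Set.Ioi t) :=
    (Real.exp_injective.comp neg_injective).injOn
  rw [← himg, integral_image_eq_integral_abs_deriv_smul measurableSet_Ioi hd hinj]
  rw [← integral_Ioi_eq r t ht]
  apply setIntegral_congr_fun measurableSet_Ioi
  intro u _
  simp [abs_of_pos (Real.exp_pos (-u)), Real.log_exp]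


/-- for every positive integer `r`, the function
`t ↦ (e^t/t^r)·∫_0^(e^(−t)) (−log x)^r dx` is non-increasing on `[1, ∞)`. -/
theorem exp_div_pow_mul_integral_antitone (r : ℕ) (hr : 0 < r) :
    AntitoneOn (fun t : ℝ =>
        (Real.exp t / t ^ r) * ∫ x in Set.Ioo (0:ℝ) (Real.exp (-t)), (-Real.log x) ^ r)
      (Set.Ici (1:ℝ)) := by
  intro s hs t ht hst
  have hs0 : (0:ℝ) < s := lt_of_lt_of_le one_pos hs
  have ht0 : (0:ℝ) < t := lt_of_lt_of_le one_pos ht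
  simp only
  rw [integral_Ioo_eq r s hs0, integral_Ioo_eq r t ht0]
  have hval : ∀ u : ℝ, 0 < u →
      Real.exp u / u^r * ((r.factorial:ℝ) * Real.exp (-u) * ∑ k ∈ Finset.range (r+1), u^k / k.factorial)
        = (r.factorial:ℝ) * ∑ k ∈ Finset.range (r+1), u^k / (k.factorial * u^r) := by
    intro u hu
    have he : Real.exp u * Real.exp (-u) = 1 := by rw [← Real.exp_add]; simp
    calc Real.exp u / u^r * ((r.factorial:ℝ) * Real.exp (-u) * ∑ k ∈ Finset.range (r+1), u^k / k.factorial)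
        = (Real.exp u * Real.exp (-u)) * ((r.factorial:ℝ) * ((∑ k ∈ Finset.range (r+1), u^k / k.factorial) / u^r)) := by ring
      _ = (r.factorial:ℝ) * ((∑ k ∈ Finset.range (r+1), u^k / k.factorial) / u^r) := by rw [he, one_mul]
      _ = (r.factorial:ℝ) * ∑ k ∈ Finset.range (r+1), u^k / (k.factorial * u^r) := by
          rw [Finset.sum_div]
          congr 1
          exact Finset.sum_congr rfl fun k _ => by rw [div_div]
  rw [hval t ht0, hval s hs0]
  apply mul_le_mul_of_nonneg_left _ (by positivity)
  apply Finset.sum_le_sum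
  intro k hk
  have hk' : k ≤ r := Nat.lt_succ_iff.mp (Finset.mem_range.mp hk)
  have hsr : s ^ r = s^k * s^(r-k) := by rw [← pow_add, Nat.add_sub_cancel' hk']
  have htr : t ^ r = t^k * t^(r-k) := by rw [← pow_add, Nat.add_sub_cancel' hk']
  have h1 : s ^ (r - k) ≤ t ^ (r - k) := pow_le_pow_left₀ hs0.le hst _
  have h2 : (0:ℝ) ≤ t^k * s^k := by positivity
  have hkey : t^k * s^r ≤ s^k * t^r := by
    calc t^k * s^r = (t^k * s^k) * s^(r-k) := by rw [hsr]; ring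
      _ ≤ (t^k * s^k) * t^(r-k) := mul_le_mul_of_nonneg_left h1 h2
      _ = s^k * t^r := by rw [htr]; ring
  rw [div_le_div_iff₀ (by positivity) (by positivity)]
  calc t^k * ((k.factorial:ℝ) * s^r) = (k.factorial:ℝ) * (t^k * s^r) := by ring
    _ ≤ (k.factorial:ℝ) * (s^k * t^r) := mul_le_mul_of_nonneg_left hkey (by positivity)
    _ = s^k * ((k.factorial:ℝ) * t^r) := by ring


end
end

section
/- For every k ∈ ℕ, the A1 constant of the weight w(x) = −log x relative to the interval J_k = (0, e^{−e^k}) equals (1 + e^k)/e^k, i.e. sup over compact intervals I ⊂ J_k of ((1/|I|)∫_I (−log x) dx)/(ess inf_I (−log x)) = (1 + e^k)/e^k. -/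
open MeasureTheory Filter Set

noncomputable section

lemma essInf_neg_log_Icc {a b : ℝ} (ha : 0 < a) (hab : a < b) :
    essInfIcc (fun x => -Real.log x) a b = -Real.log b := by
  have hb : 0 < b := ha.trans hab
  have hμ : (volume.restrict (Set.Icc a b)) ≠ 0 := by
    simp only [ne_eq, Measure.restrict_eq_zero, Real.volume_Icc,
      ENNReal.ofReal_eq_zero, not_le]
    linarith
  have hne : (ae (volume.restrict (Set.Icc a b))).NeBot := ae_neBot.2 hμ
  have hmem : ∀ᵐ x ∂(volume.restrict (Set.Icc a b)), x ∈ Set.Icc a b :=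
    ae_restrict_mem measurableSet_Icc
  have hlow : ∀ᵐ x ∂(volume.restrict (Set.Icc a b)), -Real.log b ≤ -Real.log x := by
    filter_upwards [hmem] with x hx
    exact neg_le_neg (Real.log_le_log (ha.trans_le hx.1) hx.2)
  have hupper : ∀ᵐ x ∂(volume.restrict (Set.Icc a b)), -Real.log x ≤ -Real.log a := by
    filter_upwards [hmem] with x hx
    exact neg_le_neg (Real.log_le_log ha hx.1)
  have hbddbelow : IsBoundedUnder (· ≥ ·) (ae (volume.restrict (Set.Icc a b)))
      (fun x => -Real.log x) := ⟨-Real.log b, hlow⟩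
  refine le_antisymm ?_ ?_
  · refine le_of_forall_gt_imp_ge_of_dense fun y hy => ?_
    have hky : Real.exp (-y) < b := by
      have := Real.exp_lt_exp.2 (neg_lt.1 hy)
      rwa [Real.exp_log hb] at this
    set c := max a (Real.exp (-y)) with hc
    have hcb : c < b := max_lt hab hky
    have hfreq : ∃ᶠ x in (ae (volume.restrict (Set.Icc a b))), -Real.log x ≤ y := by
      rw [frequently_ae_iff]
      intro h0
      have hsub : Set.Icc c b ⊆ {x | -Real.log x ≤ y} := by
        intro x hx
        have hex : Real.exp (-y) ≤ x := le_trans (le_max_right _ _) hx.1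
        have : -y ≤ Real.log x := by
          have := Real.log_le_log (Real.exp_pos _) hex
          rwa [Real.log_exp] at this
        simpa using neg_le_of_neg_le this
      have hsub2 : Set.Icc c b ⊆ Set.Icc a b :=
        Set.Icc_subset_Icc (le_max_left _ _) le_rfl
      have : (volume.restrict (Set.Icc a b)) (Set.Icc c b) = 0 := by
        refine measure_mono_null ?_ h0
        exact hsub
      rw [Measure.restrict_apply' measurableSet_Icc,
        Set.inter_eq_self_of_subset_left hsub2, Real.volume_Icc] at this
      rw [ENNReal.ofReal_eq_zero] at this
      linarith
    exact liminf_le_of_frequently_le hfreq hbddbelow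
  · exact le_liminf_of_le (isCoboundedUnder_ge_of_eventually_le _ hupper) hlow

lemma intAvg_neg_log {a b : ℝ} (ha : 0 < a) (hb : 0 < b) :
    intAvg (fun x => -Real.log x) a b
      = (b - a)⁻¹ * (b - a - b * Real.log b + a * Real.log a) := by
  unfold intAvg
  rw [intervalIntegral.integral_neg, integral_log]
  ring

/-- for every `k ∈ ℕ`, the `A₁` constant of `w(x) = −log x` relative to
`J_k = (0, e^(−e^k))` equals `(1 + e^k)/e^k`. -/
theorem a1Const_neg_log_on_Jk (k : ℕ) :
    sSup {c : ℝ | ∃ a b : ℝ, 0 < a ∧ a < b ∧ b < Real.exp (-(Real.exp (k:ℝ))) ∧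
        c = intAvg (fun x => -Real.log x) a b /
            essInfIcc (fun x => -Real.log x) a b}
      = (1 + Real.exp (k:ℝ)) / Real.exp (k:ℝ) := by
  set E := Real.exp (k:ℝ) with hE
  have hE0 : 0 < E := Real.exp_pos _
  set β := Real.exp (-E) with hβ
  have hβ0 : 0 < β := Real.exp_pos _
  set S := {c : ℝ | ∃ a b : ℝ, 0 < a ∧ a < b ∧ b < β ∧
      c = intAvg (fun x => -Real.log x) a b /
          essInfIcc (fun x => -Real.log x) a b} with hS
  have hval : ∀ a b : ℝ, 0 < a → a < b →
      intAvg (fun x => -Real.log x) a b / essInfIcc (fun x => -Real.log x) a b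
        = ((b - a)⁻¹ * (b - a - b * Real.log b + a * Real.log a)) / (-Real.log b) := by
    intro a b ha hab
    rw [intAvg_neg_log ha (ha.trans hab), essInf_neg_log_Icc ha hab]
  -- upper bound
  have hub : ∀ c ∈ S, c ≤ (1 + E) / E := by
    rintro c ⟨a, b, ha, hab, hbβ, rfl⟩
    have hb : 0 < b := ha.trans hab
    have hlb : Real.log b < -E := by
      have := Real.log_lt_log hb hbβ
      rwa [Real.log_exp] at this
    have ht : E < -Real.log b := by linarith
    have ht0 : (0:ℝ) < -Real.log b := by linarith
    rw [hval a b ha hab]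
    have hba : 0 < b - a := sub_pos.2 hab
    have hnum : (b - a)⁻¹ * (b - a - b * Real.log b + a * Real.log a)
        ≤ 1 - Real.log b := by
      have h1 : a * Real.log a ≤ a * Real.log b :=
        mul_le_mul_of_nonneg_left (Real.log_le_log ha hab.le) ha.le
      rw [inv_mul_le_iff₀ hba]
      nlinarith
    calc ((b - a)⁻¹ * (b - a - b * Real.log b + a * Real.log a)) / (-Real.log b)
        ≤ (1 - Real.log b) / (-Real.log b) := by
          gcongr
      _ ≤ (1 + E) / E := by
          rw [div_le_div_iff₀ ht0 hE0]
          nlinarith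
  -- lower bound construction
  have hlow : ∀ y : ℝ, y < (1 + E) / E → ∃ c ∈ S, y < c := by
    intro y hy
    have hlogβ : Real.log β = -E := Real.log_exp _
    have hcont : ContinuousAt (fun b : ℝ => (1 - Real.log b) / (-Real.log b)) β := by
      refine ContinuousAt.div ?_ ?_ ?_
      · exact continuousAt_const.sub (Real.continuousAt_log hβ0.ne')
      · exact (Real.continuousAt_log hβ0.ne').neg
      · rw [hlogβ]; simpa using hE0.ne'
    have hvalβ : (1 - Real.log β) / (-Real.log β) = (1 + E) / E := by
      rw [hlogβ]; ring_nf
    have htendβ : Tendsto (fun b : ℝ => (1 - Real.log b) / (-Real.log b))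
        (nhdsWithin β (Set.Iio β)) (nhds ((1 + E) / E)) := by
      rw [← hvalβ]
      exact (hcont.tendsto).mono_left nhdsWithin_le_nhds
    have h1 : ∀ᶠ b in nhdsWithin β (Set.Iio β),
        y < (1 - Real.log b) / (-Real.log b) :=
      htendβ.eventually (eventually_gt_nhds hy)
    have h2 : ∀ᶠ b in nhdsWithin β (Set.Iio β), 0 < b :=
      eventually_nhdsWithin_of_eventually_nhds (eventually_gt_nhds hβ0)
    have h3 : ∀ᶠ b in nhdsWithin β (Set.Iio β), b < β := by
      filter_upwards [self_mem_nhdsWithin] with b hb using hb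
    obtain ⟨b, hyb, hb0, hbβ⟩ := (h1.and (h2.and h3)).exists
    have hlb : Real.log b < -E := by
      have := Real.log_lt_log hb0 hbβ
      rwa [Real.log_exp] at this
    have ht0 : (0:ℝ) < -Real.log b := by linarith
    -- tendsto as a → 0+
    have hA : Tendsto (fun a : ℝ => b - a - b * Real.log b + a * Real.log a)
        (nhds 0) (nhds (b - b * Real.log b)) := by
      have hc : Continuous fun a : ℝ => b - a - b * Real.log b + a * Real.log a :=
        ((continuous_const.sub continuous_id').sub continuous_const).add
          Real.continuous_mul_log
      have := hc.tendsto 0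
      simpa using this
    have hB : Tendsto (fun a : ℝ => (b - a)⁻¹) (nhds 0) (nhds b⁻¹) := by
      have hc : Continuous fun a : ℝ => b - a := continuous_const.sub continuous_id'
      have := (hc.tendsto 0).inv₀ (by simpa using hb0.ne')
      simpa using this
    have htend : Tendsto
        (fun a : ℝ => ((b - a)⁻¹ * (b - a - b * Real.log b + a * Real.log a))
          / (-Real.log b))
        (nhds 0) (nhds ((b⁻¹ * (b - b * Real.log b)) / (-Real.log b))) :=
      (hB.mul hA).div_const _
    have heq : (b⁻¹ * (b - b * Real.log b)) / (-Real.log b)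
        = (1 - Real.log b) / (-Real.log b) := by
      rw [mul_sub, inv_mul_cancel₀ hb0.ne', ← mul_assoc, inv_mul_cancel₀ hb0.ne', one_mul]
    rw [heq] at htend
    have h4 : ∀ᶠ a in nhdsWithin (0:ℝ) (Set.Ioi 0),
        y < ((b - a)⁻¹ * (b - a - b * Real.log b + a * Real.log a)) / (-Real.log b) :=
      (htend.mono_left nhdsWithin_le_nhds).eventually (eventually_gt_nhds hyb)
    have h5 : ∀ᶠ a in nhdsWithin (0:ℝ) (Set.Ioi 0), a < b :=
      eventually_nhdsWithin_of_eventually_nhds (eventually_lt_nhds hb0)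
    have h6 : ∀ᶠ a in nhdsWithin (0:ℝ) (Set.Ioi 0), 0 < a := by
      filter_upwards [self_mem_nhdsWithin] with a ha using ha
    obtain ⟨a, hya, hab, ha0⟩ := (h4.and (h5.and h6)).exists
    refine ⟨_, ⟨a, b, ha0, hab, hbβ, rfl⟩, ?_⟩
    rw [hval a b ha0 hab]
    exact hya
  have hbdd : BddAbove S := ⟨(1 + E) / E, fun c hc => hub c hc⟩
  have hSne : S.Nonempty := by
    obtain ⟨c, hc, -⟩ := hlow ((1 + E) / E - 1) (by linarith)
    exact ⟨c, hc⟩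
  refine le_antisymm (csSup_le hSne hub) ?_
  refine le_of_forall_lt fun y hy => ?_
  obtain ⟨c, hcS, hyc⟩ := hlow y hy
  exact hyc.trans_le (le_csSup hbdd hcS)

end
end

section
/- Let f(x) = log(−log x) on J = (0, 1/e) and let T_k f = max(−k, min(k, f)) be its truncation at level k. Then for every k ∈ ℕ one has ‖f − T_k f‖_{BLO(J)} ≤ log(1 + e^{−k}); in particular ‖f − T_k f‖_{BLO(J)} → 0 as k → ∞, so the unbounded function f is approximable in BLO by its truncations. -/
open MeasureTheory Filter Set

noncomputable section

private lemma my_exp_neg_one_lt_one : Real.exp (-1) < 1 := by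
  have h := Real.exp_lt_exp.2 (show (-1:ℝ) < 0 by norm_num)
  simpa using h

set_option maxHeartbeats 1000000 in
/-- Core oscillation estimate. -/
private lemma my_core (K : ℝ) (hK : 0 ≤ K) {a b : ℝ} (ha : 0 < a) (hab : a < b)
    (hb : b < Real.exp (-1)) :
    lowOsc (fun x => Real.log (-Real.log x) -
      max (-K) (min K (Real.log (-Real.log x)))) a b ≤ Real.log (1 + Real.exp (-K)) := by
  set B := Real.log (1 + Real.exp (-K)) with hBdef
  have hB : 0 ≤ B := Real.log_nonneg (le_add_of_nonneg_right (Real.exp_pos _).le)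
  set g : ℝ → ℝ := fun x => max (Real.log (-Real.log x) - K) 0 with hgdef
  have hb0 : 0 < b := ha.trans hab
  have hlogb : 1 < -Real.log b := by
    have h := Real.log_lt_log hb0 hb
    rw [Real.log_exp] at h; linarith
  have hL : ∀ x, 0 < x → x ≤ b → 1 < -Real.log x := by
    intro x hx hxb
    have h := Real.log_le_log hx hxb
    linarith
  have hLpos : ∀ x ∈ Set.Icc a b, 0 < -Real.log x := fun x hx =>
    lt_trans one_pos (hL x (lt_of_lt_of_le ha hx.1) hx.2)
  have hfpos : ∀ x ∈ Set.Icc a b, 0 ≤ Real.log (-Real.log x) := fun x hx =>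
    Real.log_nonneg (le_of_lt (hL x (lt_of_lt_of_le ha hx.1) hx.2))
  -- identity between the original function and g on [a,b]
  have hid : ∀ x ∈ Set.Icc a b,
      Real.log (-Real.log x) - max (-K) (min K (Real.log (-Real.log x))) = g x := by
    intro x hx
    have h0 : 0 ≤ Real.log (-Real.log x) := hfpos x hx
    have h1 : -K ≤ min K (Real.log (-Real.log x)) := le_min (by linarith) (by linarith)
    rw [max_eq_right h1]
    show _ = max (Real.log (-Real.log x) - K) 0
    rcases le_total (Real.log (-Real.log x)) K with h | h
    · rw [min_eq_right h, max_eq_right (by linarith : Real.log (-Real.log x) - K ≤ 0)]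
      ring
    · rw [min_eq_left h, max_eq_left (by linarith : (0:ℝ) ≤ Real.log (-Real.log x) - K)]
  -- g is antitone on [a,b]
  have hganti : ∀ x ∈ Set.Icc a b, ∀ y ∈ Set.Icc a b, x ≤ y → g y ≤ g x := by
    intro x hx y hy hxy
    have hx0 : 0 < x := lt_of_lt_of_le ha hx.1
    have h1 : Real.log x ≤ Real.log y := Real.log_le_log hx0 hxy
    have h2 : Real.log (-Real.log y) ≤ Real.log (-Real.log x) :=
      Real.log_le_log (hLpos y hy) (by linarith)
    exact max_le_max (by linarith) le_rfl
  -- continuity of g on [a,b]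
  have hgcont : ContinuousOn g (Set.Icc a b) := by
    have h1 : ContinuousOn (fun x : ℝ => -Real.log x) (Set.Icc a b) := by
      apply ContinuousOn.neg
      apply Real.continuousOn_log.mono
      intro x hx
      exact ne_of_gt (lt_of_lt_of_le ha hx.1)
    have h2 : ContinuousOn (fun x : ℝ => Real.log (-Real.log x)) (Set.Icc a b) :=
      h1.log (fun x hx => ne_of_gt (hLpos x hx))
    exact (h2.sub continuousOn_const).sup continuousOn_const
  have hgint : ∀ u v, a ≤ u → u ≤ v → v ≤ b → IntervalIntegrable g volume u v := by
    intro u v hu huv hv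
    apply ContinuousOn.intervalIntegrable
    apply hgcont.mono
    rw [Set.uIcc_of_le huv]
    exact Set.Icc_subset_Icc hu hv
  -- essential infimum lower bound
  have hEss : g b ≤ essInfIcc (fun x => Real.log (-Real.log x) -
      max (-K) (min K (Real.log (-Real.log x)))) a b := by
    simp only [essInfIcc]
    have hmu : volume.restrict (Set.Icc a b) ≠ 0 := by
      rw [Ne, MeasureTheory.Measure.restrict_eq_zero, Real.volume_Icc]
      simp only [ENNReal.ofReal_eq_zero, not_le]
      linarith
    haveI : (MeasureTheory.ae (volume.restrict (Set.Icc a b))).NeBot :=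
      MeasureTheory.ae_neBot.2 hmu
    have hev : ∀ᵐ x ∂(volume.restrict (Set.Icc a b)),
        g b ≤ Real.log (-Real.log x) - max (-K) (min K (Real.log (-Real.log x))) := by
      filter_upwards [MeasureTheory.ae_restrict_mem measurableSet_Icc] with x hx
      rw [hid x hx]
      exact hganti x hx b (Set.right_mem_Icc.2 hab.le) hx.2
    have hub : ∀ᵐ x ∂(volume.restrict (Set.Icc a b)),
        Real.log (-Real.log x) - max (-K) (min K (Real.log (-Real.log x))) ≤ g a := by
      filter_upwards [MeasureTheory.ae_restrict_mem measurableSet_Icc] with x hx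
      rw [hid x hx]
      exact hganti a (Set.left_mem_Icc.2 hab.le) x hx hx.1
    have hcb := Filter.isCoboundedUnder_ge_of_eventually_le
      (MeasureTheory.ae (volume.restrict (Set.Icc a b))) hub
    exact Filter.le_liminf_of_le hcb hev
  -- facts about the threshold point c = exp(-exp K)
  set c := Real.exp (-Real.exp K) with hcdef
  have hc0 : 0 < c := Real.exp_pos _
  have hfc : ∀ x, 0 < x → x ≤ c → K ≤ Real.log (-Real.log x) := by
    intro x hx hxc
    have h1 : Real.log x ≤ -Real.exp K := by
      have h := Real.log_le_log hx hxc
      rwa [hcdef, Real.log_exp] at h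
    calc K = Real.log (Real.exp K) := (Real.log_exp K).symm
    _ ≤ Real.log (-Real.log x) := Real.log_le_log (Real.exp_pos K) (by linarith)
  have hcf : ∀ x, c ≤ x → x ≤ b → Real.log (-Real.log x) ≤ K := by
    intro x hxc hxb
    have hx0 : 0 < x := lt_of_lt_of_le hc0 hxc
    have h1 : -Real.exp K ≤ Real.log x := by
      have h := Real.log_le_log hc0 hxc
      rwa [hcdef, Real.log_exp] at h
    have h2 : 0 < -Real.log x := lt_trans one_pos (hL x hx0 hxb)
    calc Real.log (-Real.log x) ≤ Real.log (Real.exp K) := Real.log_le_log h2 (by linarith)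
    _ = K := Real.log_exp K
  -- main integral estimate
  have hMain : (∫ x in a..b, g x) ≤ (b - a) * (g b + B) := by
    rcases le_or_gt c a with hca | hac
    · -- g vanishes on [a,b]
      have hzero : ∀ x ∈ Set.Icc a b, g x = 0 := by
        intro x hx
        have h := hcf x (hca.trans hx.1) hx.2
        exact max_eq_right (by linarith)
      have h1 : (∫ x in a..b, g x) = 0 := by
        rw [intervalIntegral.integral_congr (g := fun _ => (0:ℝ))
          (by rw [Set.uIcc_of_le hab.le]; exact fun x hx => hzero x hx)]
        simp
      rw [h1, hzero b (Set.right_mem_Icc.2 hab.le)]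
      have hba : 0 < b - a := by linarith
      nlinarith
    · set b' := min b c with hb'def
      have hab' : a < b' := lt_min hab hac
      have hb'b : b' ≤ b := min_le_left _ _
      have hb'c : b' ≤ c := min_le_right _ _
      have hb'0 : 0 < b' := ha.trans hab'
      have hb'mem : b' ∈ Set.Icc a b := ⟨hab'.le, hb'b⟩
      have hfb' : K ≤ Real.log (-Real.log b') := hfc b' hb'0 hb'c
      have hgb' : g b' = Real.log (-Real.log b') - K := max_eq_left (by linarith)
      have hgid : ∀ x ∈ Set.Icc a b', g x = Real.log (-Real.log x) - K := by
        intro x hx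
        have h := hfc x (lt_of_lt_of_le ha hx.1) (hx.2.trans hb'c)
        exact max_eq_left (by linarith)
      set m := -Real.log b' + 1 with hmdef
      have hlogb' : 1 < -Real.log b' := hL b' hb'0 hb'b
      have hm : 0 < m := by rw [hmdef]; linarith
      -- pointwise tangent-line bound
      have hpt : ∀ x ∈ Set.Icc a b',
          g x ≤ (Real.log m - K - 1) + Real.log x * (-(1/m)) := by
        intro x hx
        have hxmem : x ∈ Set.Icc a b := ⟨hx.1, hx.2.trans hb'b⟩
        have ht : 0 < -Real.log x := hLpos x hxmem
        have hdiv : 0 < (-Real.log x) / m := div_pos ht hm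
        have h1 : Real.log ((-Real.log x) / m) ≤ (-Real.log x) / m - 1 :=
          Real.log_le_sub_one_of_pos hdiv
        rw [Real.log_div (ne_of_gt ht) (ne_of_gt hm)] at h1
        have h2 : Real.log x * (-(1/m)) = (-Real.log x) / m := by ring
        rw [hgid x hx, h2]
        linarith
      have hlogint : IntervalIntegrable Real.log volume a b' := by
        apply intervalIntegral.intervalIntegrable_log
        rw [Set.uIcc_of_le hab'.le]
        exact fun h => absurd h.1 (not_le.2 ha)
      have hφint : IntervalIntegrable
          (fun x => (Real.log m - K - 1) + Real.log x * (-(1/m))) volume a b' :=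
        intervalIntegrable_const.add (hlogint.mul_const _)
      have hgint1 : IntervalIntegrable g volume a b' := hgint a b' le_rfl hab'.le hb'b
      have hS1a : (∫ x in a..b', g x) ≤
          ∫ x in a..b', ((Real.log m - K - 1) + Real.log x * (-(1/m))) :=
        intervalIntegral.integral_mono_on hab'.le hgint1 hφint hpt
      have hS1b : (∫ x in a..b', ((Real.log m - K - 1) + Real.log x * (-(1/m)))) =
          (b' - a) * (Real.log m - K - 1) +
            (b' * Real.log b' - a * Real.log a - b' + a) * (-(1/m)) := by
        rw [intervalIntegral.integral_add intervalIntegrable_const (hlogint.mul_const _),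
          intervalIntegral.integral_const, intervalIntegral.integral_mul_const,
          integral_log, smul_eq_mul]
      have hSa : a * Real.log a ≤ a * Real.log b' :=
        mul_le_mul_of_nonneg_left (Real.log_le_log ha hab'.le) ha.le
      have hE2 : (b' * Real.log b' - a * Real.log a - b' + a) * (-(1/m)) ≤ b' - a := by
        rw [show (b' * Real.log b' - a * Real.log a - b' + a) * (-(1/m)) =
          (-(b' * Real.log b' - a * Real.log a - b' + a)) / m by ring, div_le_iff₀ hm]
        rw [hmdef]
        nlinarith
      have hS1 : (∫ x in a..b', g x) ≤ (b' - a) * (Real.log m - K) := by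
        rw [hS1b] at hS1a
        nlinarith
      -- log m ≤ log(-log b') + B
      have hlogm : Real.log m ≤ Real.log (-Real.log b') + B := by
        have h2 : Real.exp K ≤ -Real.log b' := by
          have h := Real.log_le_log hb'0 hb'c
          rw [hcdef, Real.log_exp] at h
          linarith
        have h1 : (1:ℝ) ≤ (-Real.log b') * Real.exp (-K) := by
          calc (1:ℝ) = Real.exp K * Real.exp (-K) := by rw [← Real.exp_add]; simp
          _ ≤ (-Real.log b') * Real.exp (-K) :=
            mul_le_mul_of_nonneg_right h2 (Real.exp_pos _).le
        have h3 : m ≤ (-Real.log b') * (1 + Real.exp (-K)) := by rw [hmdef]; nlinarith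
        have h4 := Real.log_le_log hm h3
        rw [Real.log_mul (ne_of_gt (lt_trans one_pos hlogb'))
          (by positivity)] at h4
        rw [hBdef]
        exact h4
      -- second piece
      have hgint2 : IntervalIntegrable g volume b' b := hgint b' b hab'.le hb'b le_rfl
      have hS2 : (∫ x in b'..b, g x) ≤ (b - b') * g b' := by
        have h := intervalIntegral.integral_mono_on (f := g) (g := fun _ => g b')
          hb'b hgint2 intervalIntegrable_const
          (fun x hx => hganti b' hb'mem x ⟨hab'.le.trans hx.1, hx.2⟩ hx.1)
        simpa [smul_eq_mul] using h
      have hgb'b : g b' = g b := by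
        rcases le_or_gt b c with h | h
        · rw [hb'def, min_eq_left h]
        · have hb'eq : b' = c := min_eq_right h.le
          have h1 : g b = 0 := max_eq_right (by have := hcf b h.le le_rfl; linarith)
          have h2 : g c = 0 := by
            have hfcK : Real.log (-Real.log c) = K := by
              rw [hcdef, Real.log_exp]
              simp [Real.log_exp]
            rw [hgdef]
            simp only [hfcK]
            simp
          rw [hb'eq, h2, h1]
      have hsplit : (∫ x in a..b, g x) = (∫ x in a..b', g x) + ∫ x in b'..b, g x :=
        (intervalIntegral.integral_add_adjacent_intervals hgint1 hgint2).symm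
      have hgbnn : 0 ≤ g b := le_max_right _ _
      rw [hgb'b] at hS2 hgb'
      have hS1' : (∫ x in a..b', g x) ≤ (b' - a) * (g b + B) := by
        have hle : Real.log m - K ≤ g b + B := by rw [hgb']; linarith
        calc (∫ x in a..b', g x) ≤ (b' - a) * (Real.log m - K) := hS1
        _ ≤ (b' - a) * (g b + B) := mul_le_mul_of_nonneg_left hle (by linarith)
      rw [hsplit]
      nlinarith [mul_nonneg (sub_nonneg.2 hb'b) hB]
  -- conclude
  have hba : 0 < b - a := by linarith
  have havg : intAvg (fun x => Real.log (-Real.log x) -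
      max (-K) (min K (Real.log (-Real.log x)))) a b ≤ g b + B := by
    simp only [intAvg]
    have hI : (∫ x in a..b, (Real.log (-Real.log x) -
        max (-K) (min K (Real.log (-Real.log x))))) = ∫ x in a..b, g x :=
      intervalIntegral.integral_congr
        (by rw [Set.uIcc_of_le hab.le]; exact fun x hx => hid x hx)
    rw [hI, inv_mul_le_iff₀ hba]
    calc (∫ x in a..b, g x) ≤ (b - a) * (g b + B) := hMain
    _ = (b - a) * (g b + B) := rfl
  simp only [lowOsc]
  linarith [havg, hEss]


private lemma my_bound (k : ℕ) :
    ∀ r ∈ oscSetOn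
      (fun x => Real.log (-Real.log x) -
        max (-(k:ℝ)) (min (k:ℝ) (Real.log (-Real.log x))))
      (Set.Ioo (0:ℝ) (Real.exp (-1))), r ≤ Real.log (1 + Real.exp (-(k:ℝ))) := by
  rintro r ⟨a, b, hab, hsub, rfl⟩
  have ha : a ∈ Set.Ioo (0:ℝ) (Real.exp (-1)) := hsub ⟨le_rfl, hab.le⟩
  have hb : b ∈ Set.Ioo (0:ℝ) (Real.exp (-1)) := hsub ⟨hab.le, le_rfl⟩
  exact my_core (k:ℝ) (Nat.cast_nonneg k) ha.1 hab hb.2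

private lemma my_zero_mem (k : ℕ) (hk : 1 ≤ k) :
    (0:ℝ) ∈ oscSetOn
      (fun x => Real.log (-Real.log x) -
        max (-(k:ℝ)) (min (k:ℝ) (Real.log (-Real.log x))))
      (Set.Ioo (0:ℝ) (Real.exp (-1))) := by
  refine ⟨Real.exp (-2), Real.exp (-(3/2 : ℝ)), ?_, ?_, ?_⟩
  · exact Real.exp_lt_exp.2 (by norm_num)
  · intro x hx
    constructor
    · exact lt_of_lt_of_le (Real.exp_pos _) hx.1
    · exact lt_of_le_of_lt hx.2 (Real.exp_lt_exp.2 (by norm_num))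
  · -- the function vanishes on this interval
    have hab : Real.exp (-2) < Real.exp (-(3/2 : ℝ)) := Real.exp_lt_exp.2 (by norm_num)
    have hzero : ∀ x ∈ Set.Icc (Real.exp (-2)) (Real.exp (-(3/2 : ℝ))),
        Real.log (-Real.log x) -
          max (-(k:ℝ)) (min (k:ℝ) (Real.log (-Real.log x))) = 0 := by
      intro x hx
      have hx0 : 0 < x := lt_of_lt_of_le (Real.exp_pos _) hx.1
      have h1 : -2 ≤ Real.log x := by
        have h := Real.log_le_log (Real.exp_pos _) hx.1
        rwa [Real.log_exp] at h
      have h2 : Real.log x ≤ -(3/2 : ℝ) := by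
        have h := Real.log_le_log hx0 hx.2
        rwa [Real.log_exp] at h
      have h3 : 0 < -Real.log x := by linarith
      have h4 : 0 ≤ Real.log (-Real.log x) := Real.log_nonneg (by linarith)
      have h5 : Real.log (-Real.log x) < 1 := by
        have h6 : Real.log (-Real.log x) ≤ Real.log 2 := Real.log_le_log h3 (by linarith)
        have h7 : Real.log 2 < 1 := by
          have := Real.log_two_lt_d9
          linarith
        linarith
      have h8 : Real.log (-Real.log x) ≤ (k:ℝ) := by
        have : (1:ℝ) ≤ (k:ℝ) := by exact_mod_cast hk
        linarith
      rw [min_eq_right h8, max_eq_right (by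
        have : (0:ℝ) ≤ (k:ℝ) := Nat.cast_nonneg k
        linarith : -(k:ℝ) ≤ Real.log (-Real.log x))]
      ring

    symm
    simp only [lowOsc, intAvg, essInfIcc]
    have hI : (∫ x in (Real.exp (-2))..(Real.exp (-(3/2:ℝ))),
        (Real.log (-Real.log x) -
          max (-(k:ℝ)) (min (k:ℝ) (Real.log (-Real.log x))))) = 0 := by
      rw [intervalIntegral.integral_congr (g := fun _ => (0:ℝ))
        (by rw [Set.uIcc_of_le hab.le]; exact fun x hx => hzero x hx)]
      simp
    rw [hI, mul_zero]
    have hne : volume.restrict (Set.Icc (Real.exp (-2)) (Real.exp (-(3/2:ℝ)))) ≠ 0 := by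
      rw [Ne, MeasureTheory.Measure.restrict_eq_zero, Real.volume_Icc]
      simp only [ENNReal.ofReal_eq_zero, not_le]
      linarith
    have hcongr : essInf (fun x => Real.log (-Real.log x) -
          max (-(k:ℝ)) (min (k:ℝ) (Real.log (-Real.log x))))
        (volume.restrict (Set.Icc (Real.exp (-2)) (Real.exp (-(3/2:ℝ))))) =
        essInf (fun _ => (0:ℝ))
        (volume.restrict (Set.Icc (Real.exp (-2)) (Real.exp (-(3/2:ℝ))))) := by
      apply essInf_congr_ae
      filter_upwards [MeasureTheory.ae_restrict_mem measurableSet_Icc] with x hx using hzero x hx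
    rw [hcongr, essInf_const _ hne]
    ring

private lemma my_rhs_tendsto :
    Filter.Tendsto (fun k : ℕ => Real.log (1 + Real.exp (-(k:ℝ)))) Filter.atTop (nhds 0) := by
  have h1 : Filter.Tendsto (fun k : ℕ => -(k:ℝ)) Filter.atTop Filter.atBot :=
    Filter.tendsto_neg_atBot_iff.2 tendsto_natCast_atTop_atTop
  have h2 : Filter.Tendsto (fun k : ℕ => Real.exp (-(k:ℝ))) Filter.atTop (nhds 0) :=
    Real.tendsto_exp_atBot.comp h1
  have h3 : Filter.Tendsto (fun k : ℕ => 1 + Real.exp (-(k:ℝ))) Filter.atTop (nhds 1) := by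
    simpa using tendsto_const_nhds.add h2
  have h4 := ((Real.continuousAt_log (by norm_num : (1:ℝ) ≠ 0)).tendsto).comp h3
  simpa [Function.comp_def, Real.log_one] using h4


/-- for `f(x) = log(−log x)` on `J = (0, 1/e)` and its truncations
`T_k f = max(−k, min(k, f))`, one has `‖f − T_k f‖_{BLO(J)} ≤ log(1 + e^(−k))` for
every `k ∈ ℕ`; in particular `‖f − T_k f‖_{BLO(J)} → 0` as `k → ∞`. -/
theorem log_neg_log_truncation_approx :
    (∀ k : ℕ,
      BddAbove (oscSetOn
        (fun x => Real.log (-Real.log x) -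
          max (-(k:ℝ)) (min (k:ℝ) (Real.log (-Real.log x))))
        (Set.Ioo (0:ℝ) (Real.exp (-1)))) ∧
      bloNormOn
        (fun x => Real.log (-Real.log x) -
          max (-(k:ℝ)) (min (k:ℝ) (Real.log (-Real.log x))))
        (Set.Ioo (0:ℝ) (Real.exp (-1)))
        ≤ Real.log (1 + Real.exp (-(k:ℝ)))) ∧
    Filter.Tendsto (fun k : ℕ =>
        bloNormOn
          (fun x => Real.log (-Real.log x) -
            max (-(k:ℝ)) (min (k:ℝ) (Real.log (-Real.log x))))
          (Set.Ioo (0:ℝ) (Real.exp (-1))))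
      Filter.atTop (nhds 0) := by
  have hnn : ∀ k : ℕ, (0:ℝ) ≤ Real.log (1 + Real.exp (-(k:ℝ))) := fun k =>
    Real.log_nonneg (le_add_of_nonneg_right (Real.exp_pos _).le)
  have hup : ∀ k : ℕ,
      bloNormOn
        (fun x => Real.log (-Real.log x) -
          max (-(k:ℝ)) (min (k:ℝ) (Real.log (-Real.log x))))
        (Set.Ioo (0:ℝ) (Real.exp (-1))) ≤ Real.log (1 + Real.exp (-(k:ℝ))) := by
    intro k
    simp only [bloNormOn]
    exact Real.sSup_le (my_bound k) (hnn k)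
  have hbdd : ∀ k : ℕ, BddAbove (oscSetOn
      (fun x => Real.log (-Real.log x) -
        max (-(k:ℝ)) (min (k:ℝ) (Real.log (-Real.log x))))
      (Set.Ioo (0:ℝ) (Real.exp (-1)))) := fun k =>
    ⟨Real.log (1 + Real.exp (-(k:ℝ))), fun r hr => my_bound k r hr⟩
  refine ⟨fun k => ⟨hbdd k, hup k⟩, ?_⟩
  have hlow : ∀ k : ℕ, 1 ≤ k → (0:ℝ) ≤
      bloNormOn
        (fun x => Real.log (-Real.log x) -
          max (-(k:ℝ)) (min (k:ℝ) (Real.log (-Real.log x))))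
        (Set.Ioo (0:ℝ) (Real.exp (-1))) := by
    intro k hk
    simp only [bloNormOn]
    exact le_csSup (hbdd k) (my_zero_mem k hk)
  refine tendsto_of_tendsto_of_tendsto_of_le_of_le' tendsto_const_nhds my_rhs_tendsto ?_ ?_
  · exact Filter.eventually_atTop.2 ⟨1, hlow⟩
  · exact Filter.Eventually.of_forall hup

end
end

section
/- Let (a_n)_{n≥0} be a strictly decreasing sequence of positive reals converging to 0 and let f = Σ_{n=0}^∞ n·χ_{[a_{n+1},a_n)} on Ω = (0, a_0). Then for every k ∈ ℕ one has ‖f − T_k f‖_{BLO(Ω)} ≥ 1; in particular f is not approximable in BLO by its truncations. -/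
open MeasureTheory Filter Set

noncomputable section

lemma band_val (a : ℕ → ℝ) (hanti : StrictAnti a) (m : ℕ) (x : ℝ)
    (hx : x ∈ Set.Ico (a (m+1)) (a m)) :
    (∑' n : ℕ, (n : ℝ) * Set.indicator (Set.Ico (a (n+1)) (a n)) (fun _ => (1:ℝ)) x)
      = m := by
  rw [tsum_eq_single m]
  · rw [Set.indicator_of_mem hx]; ring
  · intro j hj
    rw [Set.indicator_of_notMem, mul_zero]
    intro hxj
    rcases lt_or_gt_of_ne hj with h | h
    · exact absurd hxj.1 (not_le.mpr (lt_of_lt_of_le hx.2 (hanti.antitone h)))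
    · exact absurd hx.1 (not_le.mpr (lt_of_lt_of_le hxj.2 (hanti.antitone h)))

lemma main_aux (g : ℝ → ℝ) (A B t : ℝ) (hAB : A < B) (hBt : B < t)
    (hg2 : ∀ x ∈ Set.Ico A B, g x = 2) (hg1 : ∀ x ∈ Set.Icc B t, g x = 1) :
    lowOsc g A t = (B - A) / (t - A) := by
  have hAt : A < t := hAB.trans hBt
  have hae : (fun _ => (2:ℝ)) =ᵐ[volume.restrict (Set.Ioc A B)] g := by
    have h1 : ∀ᵐ x ∂volume.restrict (Set.Ioc A B), x ∈ Set.Ioc A B :=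
      ae_restrict_mem measurableSet_Ioc
    have h2 : ∀ᵐ x ∂volume.restrict (Set.Ioc A B), x ≠ B := by
      refine ae_mono Measure.restrict_le_self ?_
      show ∀ᵐ x ∂(volume : Measure ℝ), x ≠ B
      rw [ae_iff]
      simp only [ne_eq, not_not, Set.setOf_eq_eq_singleton]
      exact Real.volume_singleton
    filter_upwards [h1, h2] with x hx hxne
    exact (hg2 x ⟨hx.1.le, lt_of_le_of_ne hx.2 hxne⟩).symm
  have hi1 : IntervalIntegrable g volume A B := by
    rw [intervalIntegrable_iff_integrableOn_Ioc_of_le hAB.le]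
    exact ((integrableOn_const_iff (C := (2:ℝ))).mpr (Or.inr measure_Ioc_lt_top)).congr hae
  have hi2 : IntervalIntegrable g volume B t := by
    rw [intervalIntegrable_iff_integrableOn_Ioc_of_le hBt.le]
    refine ((integrableOn_const_iff (C := (1:ℝ))).mpr (Or.inr measure_Ioc_lt_top)).congr ?_
    filter_upwards [ae_restrict_mem measurableSet_Ioc] with x hx
    exact (hg1 x ⟨hx.1.le, hx.2⟩).symm
  have hIAB : ∫ x in A..B, g x = 2 * (B - A) := by
    rw [intervalIntegral.integral_congr_ae (g := fun _ => (2:ℝ)) ?_]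
    · rw [intervalIntegral.integral_const, smul_eq_mul]; ring
    · rw [Set.uIoc_of_le hAB.le]
      have h2 : ∀ᵐ x ∂(volume : Measure ℝ), x ≠ B := by
        rw [ae_iff]
        simp only [ne_eq, not_not, Set.setOf_eq_eq_singleton]
        exact Real.volume_singleton
      filter_upwards [h2] with x hxne hx
      exact hg2 x ⟨hx.1.le, lt_of_le_of_ne hx.2 hxne⟩
  have hIBt : ∫ x in B..t, g x = t - B := by
    rw [intervalIntegral.integral_congr (g := fun _ => (1:ℝ)) ?_]
    · rw [intervalIntegral.integral_const, smul_eq_mul]; ring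
    · intro x hx
      rw [Set.uIcc_of_le hBt.le] at hx
      exact hg1 x hx
  have hIAt : ∫ x in A..t, g x = 2 * (B - A) + (t - B) := by
    rw [← intervalIntegral.integral_add_adjacent_intervals hi1 hi2, hIAB, hIBt]
  have hginf : essInfIcc g A t = 1 := by
    unfold essInfIcc
    rw [essInf_eq_sSup]
    set M := volume.restrict (Set.Icc A t) with hM
    have hgge : ∀ x ∈ Set.Icc A t, 1 ≤ g x := by
      intro x hx
      rcases lt_or_ge x B with h | h
      · rw [hg2 x ⟨hx.1, h⟩]; norm_num
      · rw [hg1 x ⟨h, hx.2⟩]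
    have mem1 : (1:ℝ) ∈ {c : ℝ | M {x | g x < c} = 0} := by
      refine measure_mono_null (t := (Set.Icc A t)ᶜ) (fun x hx => ?_) ?_
      · show x ∈ (Set.Icc A t)ᶜ
        intro hxm
        exact absurd (hgge x hxm) (not_le.mpr hx)
      · rw [hM, Measure.restrict_apply measurableSet_Icc.compl]
        simp
    have ub : ∀ c ∈ {c : ℝ | M {x | g x < c} = 0}, c ≤ 1 := by
      intro c hc
      by_contra h
      push_neg at h
      have hsub : Set.Ioo B t ⊆ {x | g x < c} := by
        intro x hx
        have hx' : x ∈ Set.Icc B t := ⟨hx.1.le, hx.2.le⟩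
        show g x < c
        rw [hg1 x hx']
        exact h
      have hle : M (Set.Ioo B t) ≤ M {x | g x < c} := measure_mono hsub
      rw [hc] at hle
      have hsub2 : Set.Ioo B t ⊆ Set.Icc A t :=
        fun x hx => ⟨hAB.le.trans hx.1.le, hx.2.le⟩
      have : M (Set.Ioo B t) = ENNReal.ofReal (t - B) := by
        rw [hM, Measure.restrict_apply measurableSet_Ioo,
          Set.inter_eq_self_of_subset_left hsub2, Real.volume_Ioo]
      rw [this] at hle
      simp only [nonpos_iff_eq_zero, ENNReal.ofReal_eq_zero] at hle
      linarith
    exact le_antisymm (csSup_le ⟨1, mem1⟩ ub) (le_csSup ⟨1, ub⟩ mem1)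
  unfold lowOsc intAvg
  rw [hIAt, hginf]
  have h0 : t - A ≠ 0 := by linarith
  field_simp
  ring

/-- if `(a_n)` is a strictly decreasing positive sequence tending to `0`
and `f = Σ n·χ_{[a_(n+1), a_n)}` on `Ω = (0, a_0)`, then for every `k ∈ ℕ` one has
`‖f − T_k f‖_{BLO(Ω)} ≥ 1` (stated as: the supremum of lower oscillations over compact
subintervals of `Ω` exceeds `1 − δ` for every `δ > 0`). -/
theorem jump_function_not_truncation_approx (a : ℕ → ℝ) (hpos : ∀ n, 0 < a n)
    (hanti : StrictAnti a) (hlim : Filter.Tendsto a Filter.atTop (nhds 0))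
    (k : ℕ) (δ : ℝ) (hδ : 0 < δ) :
    ∃ s t : ℝ, s < t ∧ Set.Icc s t ⊆ Set.Ioo 0 (a 0) ∧
      1 - δ < lowOsc (fun x =>
        (∑' n : ℕ, (n : ℝ) *
            Set.indicator (Set.Ico (a (n+1)) (a n)) (fun _ => (1:ℝ)) x) -
        max (-(k:ℝ)) (min (k:ℝ)
          (∑' n : ℕ, (n : ℝ) *
              Set.indicator (Set.Ico (a (n+1)) (a n)) (fun _ => (1:ℝ)) x))) s t := by
  have hk0 : (0:ℝ) ≤ (k:ℝ) := Nat.cast_nonneg k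
  have hAB : a (k+3) < a (k+2) := hanti (by omega)
  have hBC : a (k+2) < a (k+1) := hanti (by omega)
  have hCa0 : a (k+1) < a 0 := hanti (by omega)
  have hApos : 0 < a (k+3) := hpos _
  set ε := min ((a (k+1) - a (k+2))/2) (δ * (a (k+2) - a (k+3))) with hε
  have hεpos : 0 < ε := lt_min (by linarith) (mul_pos hδ (by linarith))
  have hεle : ε ≤ δ * (a (k+2) - a (k+3)) := min_le_right _ _
  have hεle2 : ε ≤ (a (k+1) - a (k+2))/2 := min_le_left _ _
  set t := a (k+2) + ε with ht
  have hBt : a (k+2) < t := by rw [ht]; linarith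
  have htC : t < a (k+1) := by rw [ht]; linarith
  refine ⟨a (k+3), t, hAB.trans hBt, ?_, ?_⟩
  · intro x hx
    exact ⟨lt_of_lt_of_le hApos hx.1, lt_of_le_of_lt hx.2 (htC.trans hCa0)⟩
  · have hg2 : ∀ x ∈ Set.Ico (a (k+3)) (a (k+2)), (fun x =>
        (∑' n : ℕ, (n : ℝ) *
            Set.indicator (Set.Ico (a (n+1)) (a n)) (fun _ => (1:ℝ)) x) -
        max (-(k:ℝ)) (min (k:ℝ)
          (∑' n : ℕ, (n : ℝ) *
              Set.indicator (Set.Ico (a (n+1)) (a n)) (fun _ => (1:ℝ)) x))) x = 2 := by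
      intro x hx
      have hb := band_val a hanti (k+2) x hx
      simp only [hb]
      push_cast
      rw [min_eq_left (by linarith), max_eq_right (by linarith)]
      ring
    have hg1 : ∀ x ∈ Set.Icc (a (k+2)) t, (fun x =>
        (∑' n : ℕ, (n : ℝ) *
            Set.indicator (Set.Ico (a (n+1)) (a n)) (fun _ => (1:ℝ)) x) -
        max (-(k:ℝ)) (min (k:ℝ)
          (∑' n : ℕ, (n : ℝ) *
              Set.indicator (Set.Ico (a (n+1)) (a n)) (fun _ => (1:ℝ)) x))) x = 1 := by
      intro x hx
      have hx' : x ∈ Set.Ico (a (k+2)) (a (k+1)) := ⟨hx.1, lt_of_le_of_lt hx.2 htC⟩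
      have hb := band_val a hanti (k+1) x hx'
      simp only [hb]
      push_cast
      rw [min_eq_left (by linarith), max_eq_right (by linarith)]
      ring
    rw [main_aux _ (a (k+3)) (a (k+2)) t hAB hBt hg2 hg1]
    rw [lt_div_iff₀ (by linarith : (0:ℝ) < t - a (k+3))]
    have hδε : 0 < δ * ε := mul_pos hδ hεpos
    nlinarith [hεle, hδε, ht, hBt]


end
end
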